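/- arXiv:1605.06596 — 3 statements merged into one kernel-verified Lean document; each statement's English description precedes it below -/
import Mathlib

section
/- Let Q be a finite quiver with involution σ and duality structure (s, τ), and let θ : ℤ^{Q_0} → ℤ be a σ-compatible stability. A self-dual representation M of Q is σ-semistable if and only if M is semistable as an ordinary representation. (Note that the dimension vector of a self-dual representation is σ-invariant, so θ(dim M) = 0 and the slope of a nonzero self-dual representation is 0.) -/
open scoped BigOperators

/-- A finite quiver. -/
structure FinQuiver where
  V : Type
  A : Type
  [fintypeV : Fintype V]
  [fintypeA : Fintype A]
  [decEqV : DecidableEq V]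
  [decEqA : DecidableEq A]
  src : A → V
  tgt : A → V

attribute [instance] FinQuiver.fintypeV FinQuiver.fintypeA FinQuiver.decEqV FinQuiver.decEqA

/-- A finite-dimensional complex representation of a quiver. -/
structure QRep (Q : FinQuiver) where
  carrier : Q.V → Type
  [acg : ∀ i, AddCommGroup (carrier i)]
  [mod : ∀ i, Module ℂ (carrier i)]
  [fd : ∀ i, FiniteDimensional ℂ (carrier i)]
  map : ∀ a : Q.A, carrier (Q.src a) →ₗ[ℂ] carrier (Q.tgt a)

attribute [instance] QRep.acg QRep.mod QRep.fd

namespace QRep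

variable {Q : FinQuiver}

/-- A family of subspaces of a representation. -/
abbrev SubFam (X : QRep Q) := ∀ i, Submodule ℂ (X.carrier i)

/-- The family of subspaces is a subrepresentation: it is stable under all structure maps. -/
def IsSubRep (X : QRep Q) (V : X.SubFam) : Prop :=
  ∀ a : Q.A, ∀ x ∈ V (Q.src a), X.map a x ∈ V (Q.tgt a)

/-- Dimension vector (with values in `ℤ`) of a family of subspaces. -/
noncomputable def dimZ {X : QRep Q} (V : X.SubFam) : Q.V → ℤ :=
  fun i => (Module.finrank ℂ (V i) : ℤ)

/-- Dimension vector (with values in `ℤ`) of a representation. -/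
noncomputable def dimVecZ (X : QRep Q) : Q.V → ℤ :=
  fun i => (Module.finrank ℂ (X.carrier i) : ℤ)

/-- The slope of a dimension vector with respect to a stability `θ`. -/
noncomputable def slope (θ : (Q.V → ℤ) →+ ℤ) (d : Q.V → ℤ) : ℚ :=
  (θ d : ℚ) / ((∑ i, d i : ℤ) : ℚ)

/-- A representation is semistable when every nonzero subrepresentation has slope at most
the slope of the representation. -/
def Semistable (θ : (Q.V → ℤ) →+ ℤ) (X : QRep Q) : Prop :=
  ∀ V : X.SubFam, X.IsSubRep V → V ≠ ⊥ → slope θ (dimZ V) ≤ slope θ X.dimVecZ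

/-- Cast along an equality of vertices. -/
def castEquiv (X : QRep Q) {i j : Q.V} (h : i = j) : X.carrier i ≃ₗ[ℂ] X.carrier j := by
  subst h; exact LinearEquiv.refl ℂ _

end QRep

/-- An involution of a quiver. -/
structure QInv (Q : FinQuiver) where
  onV : Q.V → Q.V
  onA : Q.A → Q.A
  invV : ∀ i, onV (onV i) = i
  invA : ∀ a, onA (onA a) = a
  src_onA : ∀ a, Q.src (onA a) = onV (Q.tgt a)
  tgt_onA : ∀ a, Q.tgt (onA a) = onV (Q.src a)
  fix_onA : ∀ a, Q.tgt a = onV (Q.src a) → onA a = a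

/-- A duality structure on a quiver with involution. -/
structure Duality (Q : FinQuiver) (σ : QInv Q) where
  s : Q.V → ℤ
  τ : Q.A → ℤ
  s_pm : ∀ i, s i = 1 ∨ s i = -1
  τ_pm : ∀ a, τ a = 1 ∨ τ a = -1
  s_inv : ∀ i, s (σ.onV i) = s i
  ττ : ∀ a, τ a * τ (σ.onA a) = s (Q.src a) * s (Q.tgt a)

namespace QRep

variable {Q : FinQuiver}

/-- A stability is σ-compatible if `θ ∘ σ = -θ`. -/
def SigmaCompatible (σ : QInv Q) (θ : (Q.V → ℤ) →+ ℤ) : Prop :=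
  ∀ d : Q.V → ℤ, θ (fun i => d (σ.onV i)) = - θ d

/-- The dual representation `S(U)`, with `S(U)_i = (U_{σ(i)})^*` and
`S(u)_α = τ_α ⬝ (u_{σ(α)})^∨`. -/
noncomputable def dualRep (σ : QInv Q) (D : Duality Q σ) (X : QRep Q) : QRep Q where
  carrier := fun i => Module.Dual ℂ (X.carrier (σ.onV i))
  map := fun a => (D.τ a : ℂ) •
    (((X.castEquiv (σ.src_onA a)).dualMap.symm.toLinearMap).comp
      (((X.map (σ.onA a)).dualMap).comp
        ((X.castEquiv (σ.tgt_onA a)).dualMap.toLinearMap)))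

end QRep

namespace QRep

variable {Q : FinQuiver}

/-- Bilinear forms on the total space `⊕ᵢ Xᵢ` of a representation. -/
abbrev Bilin (X : QRep Q) := (∀ i, X.carrier i) →ₗ[ℂ] (∀ i, X.carrier i) →ₗ[ℂ] ℂ

/-- Nondegeneracy of a bilinear form. -/
def Nondeg (X : QRep Q) (B : X.Bilin) : Prop := ∀ x, (∀ y, B x y = 0) → x = 0

/-- Condition (i) for a self-dual representation: `M_i` and `M_j` are orthogonal
unless `i = σ(j)` (equivalently `j = σ(i)`). -/
def sdOrthBlocks (σ : QInv Q) (X : QRep Q) (B : X.Bilin) : Prop :=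
  ∀ i j, j ≠ σ.onV i → ∀ (x : X.carrier i) (y : X.carrier j),
    B (Pi.single i x) (Pi.single j y) = 0

/-- Condition (ii) for a self-dual representation: `⟨x, x'⟩ = s_i ⟨x', x⟩` on
`M_i + M_{σ(i)}`. -/
def sdSymm (σ : QInv Q) (D : Duality Q σ) (X : QRep Q) (B : X.Bilin) : Prop :=
  ∀ i (x : X.carrier i) (y : X.carrier (σ.onV i)),
    B (Pi.single i x) (Pi.single (σ.onV i) y)
      = (D.s i : ℂ) * B (Pi.single (σ.onV i) y) (Pi.single i x)

/-- Condition (iii) for a self-dual representation: `⟨m_α x, x'⟩ = τ_α ⟨x, m_{σ(α)} x'⟩`. -/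
def sdArrow (σ : QInv Q) (D : Duality Q σ) (X : QRep Q) (B : X.Bilin) : Prop :=
  ∀ (a : Q.A) (x : X.carrier (Q.src a)) (y : X.carrier (σ.onV (Q.tgt a))),
    B (Pi.single (Q.tgt a) (X.map a x)) (Pi.single (σ.onV (Q.tgt a)) y)
      = (D.τ a : ℂ) * B (Pi.single (Q.src a) x)
          (Pi.single (Q.tgt (σ.onA a)) (X.map (σ.onA a) (X.castEquiv (σ.src_onA a).symm y)))

/-- The bilinear form `B` makes `X` a self-dual representation. -/
def IsSelfDualForm (σ : QInv Q) (D : Duality Q σ) (X : QRep Q) (B : X.Bilin) : Prop :=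
  Nondeg X B ∧ sdOrthBlocks σ X B ∧ sdSymm σ D X B ∧ sdArrow σ D X B

/-- The orthogonal `U^⊥` of a family of subspaces:
`U^⊥_i = {m ∈ M_i : ⟨m, x⟩ = 0 for all x ∈ U_{σ(i)}}`. -/
noncomputable def orthFam (σ : QInv Q) (X : QRep Q) (B : X.Bilin) (U : X.SubFam) : X.SubFam :=
  fun i => ⨅ y : (U (σ.onV i)),
    LinearMap.ker ((B.comp (LinearMap.single ℂ X.carrier i)).flip
      (Pi.single (σ.onV i) (y : X.carrier (σ.onV i))))

/-- A family of subspaces is isotropic if `U ≤ U^⊥`. -/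
def IsotropicFam (σ : QInv Q) (X : QRep Q) (B : X.Bilin) (U : X.SubFam) : Prop :=
  U ≤ orthFam σ X B U

/-- σ-semistability of a self-dual representation: every nonzero isotropic
subrepresentation has slope at most `0`. -/
def SigmaSemistable (σ : QInv Q) (θ : (Q.V → ℤ) →+ ℤ) (X : QRep Q) (B : X.Bilin) : Prop :=
  ∀ U : X.SubFam, X.IsSubRep U → IsotropicFam σ X B U → U ≠ ⊥ → slope θ (dimZ U) ≤ 0

end QRep

/-! ### Auxiliary lemmas -/

namespace QRep

variable {Q : FinQuiver}

lemma single_cast' (X : QRep Q) {i j : Q.V} (h : i = j) (x : X.carrier i) :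
    Pi.single j (X.castEquiv h x) = Pi.single i x := by subst h; rfl

lemma mem_cast' {X : QRep Q} (U : X.SubFam) {i j : Q.V} (h : i = j) {x : X.carrier i}
    (hx : x ∈ U i) : X.castEquiv h x ∈ U j := by subst h; exact hx

variable (σ : QInv Q) (M : QRep Q) (B : M.Bilin)

lemma mem_inf_fam {X : QRep Q} (U V : X.SubFam) (i : Q.V) (x : X.carrier i) :
    x ∈ (U ⊓ V) i ↔ x ∈ U i ∧ x ∈ V i := Submodule.mem_inf

lemma mem_sup_fam {X : QRep Q} (U V : X.SubFam) (i : Q.V) (x : X.carrier i) :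
    x ∈ (U ⊔ V) i ↔ ∃ y ∈ U i, ∃ z ∈ V i, y + z = x := Submodule.mem_sup

lemma mem_sup_fam_left {X : QRep Q} (U V : X.SubFam) (i : Q.V) {x : X.carrier i}
    (h : x ∈ U i) : x ∈ (U ⊔ V) i := Submodule.mem_sup_left h

lemma mem_sup_fam_right {X : QRep Q} (U V : X.SubFam) (i : Q.V) {x : X.carrier i}
    (h : x ∈ V i) : x ∈ (U ⊔ V) i := Submodule.mem_sup_right h

lemma mem_orthFam {U : M.SubFam} {i : Q.V} {x : M.carrier i} :
    x ∈ orthFam σ M B U i ↔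
      ∀ y ∈ U (σ.onV i), B (Pi.single i x) (Pi.single (σ.onV i) y) = 0 := by
  constructor
  · intro h y hy
    have := (Submodule.mem_iInf _).mp h ⟨y, hy⟩
    simpa only [LinearMap.mem_ker, LinearMap.flip_apply, LinearMap.comp_apply,
      LinearMap.coe_single] using this
  · intro h
    refine (Submodule.mem_iInf _).mpr fun y => ?_
    simpa only [LinearMap.mem_ker, LinearMap.flip_apply, LinearMap.comp_apply,
      LinearMap.coe_single] using h y y.2

lemma orthFam_antitone {U U' : M.SubFam} (h : U ≤ U') :
    orthFam σ M B U' ≤ orthFam σ M B U := by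
  intro i x hx
  rw [mem_orthFam] at hx ⊢
  intro y hy
  exact hx y (h _ hy)

/-- The pairing `M_i → (M_{σ(i)})^*` induced by `B`. -/
noncomputable def pairMap (i : Q.V) : M.carrier i →ₗ[ℂ] Module.Dual ℂ (M.carrier (σ.onV i)) :=
  (B.comp (LinearMap.single ℂ M.carrier i)).compl₂ (LinearMap.single ℂ M.carrier (σ.onV i))

lemma pairMap_apply (i : Q.V) (x : M.carrier i) (y : M.carrier (σ.onV i)) :
    pairMap σ M B i x y = B (Pi.single i x) (Pi.single (σ.onV i) y) := rfl

variable {D : Duality Q σ}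

lemma pairMap_injective (hB : IsSelfDualForm σ D M B) (i : Q.V) :
    Function.Injective (pairMap σ M B i) := by
  rw [injective_iff_map_eq_zero]
  intro x hx
  have hz : ∀ z : ∀ j, M.carrier j, B (Pi.single i x) z = 0 := by
    intro z
    have hzz : z = ∑ j, Pi.single j (z j) := (Finset.univ_sum_single z).symm
    rw [hzz, map_sum]
    refine Finset.sum_eq_zero fun j _ => ?_
    by_cases hj : j = σ.onV i
    · subst hj
      have := congrFun (congrArg DFunLike.coe hx) (z (σ.onV i))
      simpa [pairMap_apply] using this
    · exact hB.2.1 i j hj x (z j)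
  have h0 : Pi.single i x = 0 := hB.1 _ hz
  simpa using congrFun h0 i

lemma finrank_carrier_sigma (hB : IsSelfDualForm σ D M B) (i : Q.V) :
    Module.finrank ℂ (M.carrier (σ.onV i)) = Module.finrank ℂ (M.carrier i) := by
  have h1 : ∀ j, Module.finrank ℂ (M.carrier j) ≤ Module.finrank ℂ (M.carrier (σ.onV j)) := by
    intro j
    calc Module.finrank ℂ (M.carrier j)
        ≤ Module.finrank ℂ (Module.Dual ℂ (M.carrier (σ.onV j))) :=
          LinearMap.finrank_le_finrank_of_injective (pairMap_injective σ M B hB j)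
      _ = Module.finrank ℂ (M.carrier (σ.onV j)) := Subspace.dual_finrank_eq
  have h2 := h1 (σ.onV i)
  rw [σ.invV i] at h2
  exact le_antisymm h2 (h1 i)

lemma pairMap_surjective (hB : IsSelfDualForm σ D M B) (i : Q.V) :
    Function.Surjective (pairMap σ M B i) := by
  refine (LinearMap.injective_iff_surjective_of_finrank_eq_finrank ?_).mp
    (pairMap_injective σ M B hB i)
  rw [Subspace.dual_finrank_eq]
  exact (finrank_carrier_sigma σ M B hB i).symm

lemma finrank_orthFam (hB : IsSelfDualForm σ D M B) (U : M.SubFam) (i : Q.V) :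
    (Module.finrank ℂ (orthFam σ M B U i) : ℤ)
      = Module.finrank ℂ (M.carrier i) - Module.finrank ℂ (U (σ.onV i)) := by
  set g : M.carrier i →ₗ[ℂ] Module.Dual ℂ (U (σ.onV i)) :=
    ((U (σ.onV i)).dualRestrict).comp (pairMap σ M B i) with hg
  have hsurj : Function.Surjective g :=
    (Subspace.dualRestrict_surjective).comp (pairMap_surjective σ M B hB i)
  have hker : LinearMap.ker g = orthFam σ M B U i := by
    ext x
    rw [LinearMap.mem_ker, mem_orthFam]
    constructor
    · intro h y hy
      have := congrFun (congrArg DFunLike.coe h) ⟨y, hy⟩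
      simpa [hg, Submodule.dualRestrict_apply, pairMap_apply] using this
    · intro h
      ext y
      simpa [hg, Submodule.dualRestrict_apply, pairMap_apply] using h y y.2
  have hrk := LinearMap.finrank_range_add_finrank_ker g
  rw [LinearMap.range_eq_top.mpr hsurj, finrank_top, hker] at hrk
  rw [Subspace.dual_finrank_eq] at hrk
  omega

lemma orthFam_isSubRep (hB : IsSelfDualForm σ D M B) {U : M.SubFam} (hU : M.IsSubRep U) :
    M.IsSubRep (orthFam σ M B U) := by
  intro a x hx
  rw [mem_orthFam] at hx ⊢
  intro y hy
  rw [hB.2.2.2 a x y]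
  set y' := M.castEquiv (σ.src_onA a).symm y with hy'def
  have hy' : y' ∈ U (Q.src (σ.onA a)) := mem_cast' U _ hy
  have hz : M.map (σ.onA a) y' ∈ U (Q.tgt (σ.onA a)) := hU (σ.onA a) y' hy'
  have h1 : Pi.single (Q.tgt (σ.onA a)) (M.map (σ.onA a) y')
      = Pi.single (σ.onV (Q.src a)) (M.castEquiv (σ.tgt_onA a) (M.map (σ.onA a) y')) :=
    (single_cast' M (σ.tgt_onA a) _).symm
  rw [h1, hx _ (mem_cast' U (σ.tgt_onA a) hz), mul_zero]

lemma le_orth_orth (hB : IsSelfDualForm σ D M B) (U : M.SubFam) :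
    U ≤ orthFam σ M B (orthFam σ M B U) := by
  intro i x hx
  rw [mem_orthFam]
  intro y hy
  rw [hB.2.2.1 i x y]
  rw [mem_orthFam] at hy
  have h0 := hy (M.castEquiv (σ.invV i).symm x) (mem_cast' U _ hx)
  rw [single_cast'] at h0
  rw [h0, mul_zero]

lemma orth_orth_eq (hB : IsSelfDualForm σ D M B) (U : M.SubFam) :
    orthFam σ M B (orthFam σ M B U) = U := by
  funext i
  refine (Submodule.eq_of_le_of_finrank_le (le_orth_orth σ M B hB U i) ?_).symm
  have h1 := finrank_orthFam σ M B hB (orthFam σ M B U) i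
  have h2 := finrank_orthFam σ M B hB U (σ.onV i)
  have h3 := finrank_carrier_sigma σ M B hB i
  have h4 : (Module.finrank ℂ (U (σ.onV (σ.onV i))) : ℤ) = Module.finrank ℂ (U i) :=
    congrArg (fun j => (Module.finrank ℂ (U j) : ℤ)) (σ.invV i)
  omega

lemma orth_sup (U V : M.SubFam) :
    orthFam σ M B (U ⊔ V) = orthFam σ M B U ⊓ orthFam σ M B V := by
  funext i
  ext x
  rw [mem_inf_fam, mem_orthFam, mem_orthFam, mem_orthFam]
  constructor
  · intro h
    refine ⟨fun y hy => h y ?_, fun y hy => h y ?_⟩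
    · exact mem_sup_fam_left U V _ hy
    · exact mem_sup_fam_right U V _ hy
  · rintro ⟨h1, h2⟩ y hy
    rcases (mem_sup_fam U V _ y).mp hy with ⟨a, ha, b, hb, rfl⟩
    rw [Pi.single_add, map_add, h1 a ha, h2 b hb, add_zero]

variable (θ : (Q.V → ℤ) →+ ℤ)

lemma theta_dimVecZ (hθ : SigmaCompatible σ θ) (hB : IsSelfDualForm σ D M B) :
    θ M.dimVecZ = 0 := by
  have h1 : (fun i => M.dimVecZ (σ.onV i)) = M.dimVecZ := by
    funext i
    simp only [dimVecZ]
    exact_mod_cast finrank_carrier_sigma σ M B hB i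
  have h2 := hθ M.dimVecZ
  rw [h1] at h2
  omega

lemma theta_orthFam (hθ : SigmaCompatible σ θ) (hB : IsSelfDualForm σ D M B) (U : M.SubFam) :
    θ (dimZ (orthFam σ M B U)) = θ (dimZ U) := by
  have h1 : dimZ (orthFam σ M B U)
      = M.dimVecZ - (fun i => dimZ U (σ.onV i)) := by
    funext i
    exact finrank_orthFam σ M B hB U i
  rw [h1, map_sub, theta_dimVecZ σ M B θ hθ hB, hθ (dimZ U)]
  omega

lemma theta_sup_inf (U V : M.SubFam) :
    θ (dimZ (U ⊔ V)) + θ (dimZ (U ⊓ V)) = θ (dimZ U) + θ (dimZ V) := by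
  rw [← map_add, ← map_add]
  congr 1
  funext i
  have := Submodule.finrank_sup_add_finrank_inf_eq (U i) (V i)
  simp only [Pi.add_apply, dimZ]
  exact_mod_cast congrArg (Nat.cast (R := ℤ)) this

lemma dimZ_sum_pos {U : M.SubFam} (h : U ≠ ⊥) : 0 < ∑ i, dimZ U i := by
  obtain ⟨i, hi⟩ := Function.ne_iff.mp h
  refine Finset.sum_pos' (fun j _ => by simp only [dimZ]; positivity) ⟨i, Finset.mem_univ i, ?_⟩
  have : U i ≠ ⊥ := by simpa using hi
  have : Module.finrank ℂ (U i) ≠ 0 := fun hz => this (Submodule.finrank_eq_zero.mp hz)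
  simp only [dimZ]
  omega

lemma slope_nonpos_of_theta {U : M.SubFam} (h : θ (dimZ U) ≤ 0) :
    slope θ (dimZ U) ≤ 0 := by
  apply div_nonpos_of_nonpos_of_nonneg
  · exact_mod_cast h
  · have : (0:ℤ) ≤ ∑ i, dimZ U i := Finset.sum_nonneg fun i _ => by simp only [QRep.dimZ]; positivity
    exact_mod_cast this

lemma theta_nonpos_of_slope {U : M.SubFam} (hne : U ≠ ⊥) (h : slope θ (dimZ U) ≤ 0) :
    θ (dimZ U) ≤ 0 := by
  by_contra hpos
  push_neg at hpos
  have hden : (0:ℚ) < ((∑ i, dimZ U i : ℤ) : ℚ) := by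
    exact_mod_cast dimZ_sum_pos M hne
  have : (0:ℚ) < slope θ (dimZ U) := div_pos (by exact_mod_cast hpos) hden
  linarith

lemma slope_M_eq_zero (hθ : SigmaCompatible σ θ) (hB : IsSelfDualForm σ D M B) :
    slope θ M.dimVecZ = 0 := by
  rw [slope, theta_dimVecZ σ M B θ hθ hB]
  simp

end QRep

/-- Let `Q` be a finite quiver with involution `σ`, duality structure
`(s, τ)` and σ-compatible stability `θ`.  A self-dual representation `M` (a representation
together with a bilinear form satisfying conditions (i)–(iii) and nondegeneracy) is
σ-semistable if and only if it is semistable as an ordinary representation. -/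
theorem sigmaSemistable_iff_semistable (Q : FinQuiver) (σ : QInv Q) (D : Duality Q σ)
    (θ : (Q.V → ℤ) →+ ℤ) (hθ : QRep.SigmaCompatible σ θ)
    (M : QRep Q) (B : M.Bilin) (hB : QRep.IsSelfDualForm σ D M B) :
    QRep.SigmaSemistable σ θ M B ↔ QRep.Semistable θ M := by
  constructor
  · intro hσ U hU hne
    rw [QRep.slope_M_eq_zero σ M B θ hθ hB]
    set O := QRep.orthFam σ M B U with hO
    set V := U ⊓ O with hV
    have hsupinf := QRep.theta_sup_inf M θ U O
    have hOθ : θ (QRep.dimZ O) = θ (QRep.dimZ U) := QRep.theta_orthFam σ M B θ hθ hB U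
    have hWperp : QRep.orthFam σ M B (U ⊔ O) = O ⊓ U := by
      rw [QRep.orth_sup, ← hO, QRep.orth_orth_eq σ M B hB U]
    rw [← hV] at hsupinf
    have hWθ : θ (QRep.dimZ (U ⊔ O)) = θ (QRep.dimZ V) := by
      have := QRep.theta_orthFam σ M B θ hθ hB (U ⊔ O)
      rw [hWperp] at this
      rw [← this, hV, inf_comm]
    have hVU : θ (QRep.dimZ V) = θ (QRep.dimZ U) := by omega
    have hUnp : θ (QRep.dimZ U) ≤ 0 := by
      by_cases hVbot : V = ⊥
      · have : QRep.dimZ V = 0 := by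
          funext i
          have : V i = ⊥ := congrFun hVbot i
          simp [QRep.dimZ, this]
        rw [this, map_zero] at hVU
        omega
      · have hVsub : M.IsSubRep V := by
          intro a x hx
          have hx' := (QRep.mem_inf_fam U O _ x).mp hx
          exact (QRep.mem_inf_fam U O _ _).mpr
            ⟨hU a x hx'.1, QRep.orthFam_isSubRep σ M B hB hU a x hx'.2⟩
        have hViso : QRep.IsotropicFam σ M B V := by
          intro i x hx
          have h1 : x ∈ O i := ((QRep.mem_inf_fam U O i x).mp hx).2
          exact QRep.orthFam_antitone σ M B (inf_le_left : V ≤ U) i h1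
        have := hσ V hVsub hViso hVbot
        have := QRep.theta_nonpos_of_slope M θ hVbot this
        omega
    exact QRep.slope_nonpos_of_theta M θ hUnp
  · intro hss U hU hiso hne
    have := hss U hU hne
    rwa [QRep.slope_M_eq_zero σ M B θ hθ hB] at this
end

section
/- Let Q be a finite quiver with involution σ and duality structure (s, τ), and let θ : ℤ^{Q_0} → ℤ be a σ-compatible stability. Every self-dual representation M of Q admits a unique σ-Harder–Narasimhan filtration: there is exactly one chain of isotropic subrepresentations 0 = U_0 ⊂ U_1 ⊂ ⋯ ⊂ U_r ⊂ M (with r ≥ 0 and all inclusions U_{k−1} ⊂ U_k strict) such that each subquotient U_k/U_{k−1} (k = 1,…,r) is semistable, μ(U_1/U_0) > μ(U_2/U_1) > ⋯ > μ(U_r/U_{r−1}) > 0, and the self-dual representation M//U_r is σ-semistable if it is nonzero. Uniqueness includes the uniqueness of the length r. -/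
open scoped BigOperators

namespace QRep

variable {Q : FinQuiver}

/-- Semistability of the subquotient `W/V` of a representation `X` (for `V ≤ W`):
every subrepresentation `Y` with `V ≤ Y ≤ W`, `Y ≠ V`, satisfies
`μ(Y/V) ≤ μ(W/V)`.  (Subrepresentations of `W/V` correspond to such `Y`.) -/
def SubquotSemistable (θ : (Q.V → ℤ) →+ ℤ) (X : QRep Q) (V W : X.SubFam) : Prop :=
  ∀ Y : X.SubFam, X.IsSubRep Y → V ≤ Y → Y ≤ W → Y ≠ V →
    slope θ (dimZ Y - dimZ V) ≤ slope θ (dimZ W - dimZ V)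

/-- σ-semistability of the self-dual subquotient `M ∕∕ V = V^⊥/V` of a self-dual
representation `(X, B)`: every isotropic subrepresentation `W` with `V ≤ W ≤ V^⊥`,
`W ≠ V` (these correspond to the nonzero isotropic subrepresentations of `M ∕∕ V`)
satisfies `μ(W/V) ≤ 0`. -/
def SigmaSemistableQuot (σ : QInv Q) (θ : (Q.V → ℤ) →+ ℤ) (X : QRep Q) (B : X.Bilin)
    (V : X.SubFam) : Prop :=
  ∀ W : X.SubFam, X.IsSubRep W → V ≤ W → W ≤ orthFam σ X B V →
    IsotropicFam σ X B W → W ≠ V → slope θ (dimZ W - dimZ V) ≤ 0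

/-- The slope of the `k`-th subquotient of a filtration. -/
noncomputable def stepSlope (θ : (Q.V → ℤ) →+ ℤ) {X : QRep Q} (r : ℕ)
    (U : Fin (r+1) → X.SubFam) (k : Fin r) : ℚ :=
  slope θ (dimZ (U k.succ) - dimZ (U k.castSucc))

/-- `U` is the σ-Harder–Narasimhan filtration `0 = U_0 ⊂ U_1 ⊂ ⋯ ⊂ U_r ⊂ M` of the
self-dual representation `(X, B)`: an isotropic filtration with semistable subquotients
of strictly decreasing positive slopes such that `M ∕∕ U_r` is σ-semistable. -/
def IsSigmaHN (σ : QInv Q) (θ : (Q.V → ℤ) →+ ℤ) (X : QRep Q) (B : X.Bilin)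
    (r : ℕ) (U : Fin (r+1) → X.SubFam) : Prop :=
  (∀ k, X.IsSubRep (U k)) ∧
  (U 0 = ⊥) ∧
  (∀ k : Fin r, U k.castSucc ≤ U k.succ) ∧
  (∀ k : Fin r, U k.castSucc ≠ U k.succ) ∧
  (∀ k, IsotropicFam σ X B (U k)) ∧
  (∀ k : Fin r, SubquotSemistable θ X (U k.castSucc) (U k.succ)) ∧
  (∀ k l : Fin r, k < l → stepSlope θ r U l < stepSlope θ r U k) ∧
  (∀ k : Fin r, 0 < stepSlope θ r U k) ∧
  SigmaSemistableQuot σ θ X B (U (Fin.last r))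

end QRep

namespace SHN
open Module QRep

/-! ### Mediant lemmas over ℚ -/

lemma med_le_le {a b c n1 n2 : ℚ} (h1 : 0 < n1) (h2 : 0 < n2)
    (ha : a / n1 ≤ c) (hb : b / n2 ≤ c) : (a + b) / (n1 + n2) ≤ c := by
  rw [div_le_iff₀ h1] at ha; rw [div_le_iff₀ h2] at hb
  rw [div_le_iff₀ (by linarith)]; nlinarith

lemma med_le_lt {a b c n1 n2 : ℚ} (h1 : 0 < n1) (h2 : 0 < n2)
    (ha : a / n1 ≤ c) (hb : b / n2 < c) : (a + b) / (n1 + n2) < c := by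
  rw [div_le_iff₀ h1] at ha; rw [div_lt_iff₀ h2] at hb
  rw [div_lt_iff₀ (by linarith)]; nlinarith

lemma le_med {a b c n1 n2 : ℚ} (h1 : 0 < n1) (h2 : 0 < n2)
    (ha : c ≤ a / n1) (hb : c ≤ b / n2) : c ≤ (a + b) / (n1 + n2) := by
  rw [le_div_iff₀ h1] at ha; rw [le_div_iff₀ h2] at hb
  rw [le_div_iff₀ (by linarith)]; nlinarith

/-- If the right part is strictly below the mediant, the left part is strictly above it. -/
lemma left_gt_of_right_lt {a b n1 n2 : ℚ} (h1 : 0 < n1) (h2 : 0 < n2)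
    (hb : b / n2 < (a + b) / (n1 + n2)) : (a + b) / (n1 + n2) < a / n1 := by
  rw [div_lt_div_iff₀ h2 (by linarith)] at hb
  rw [div_lt_div_iff₀ (by linarith) h1]; nlinarith

/-- Seesaw: if the left part is at most the mediant, the mediant is at most the right part. -/
lemma med_le_right_of_left_le {a b n1 n2 : ℚ} (h1 : 0 < n1) (h2 : 0 < n2)
    (ha : a / n1 ≤ (a + b) / (n1 + n2)) : (a + b) / (n1 + n2) ≤ b / n2 := by
  rw [div_le_div_iff₀ h1 (by linarith)] at ha
  rw [div_le_div_iff₀ (by linarith) h2]; nlinarith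

end SHN
namespace SHN

section Basic
variable {Q : FinQuiver} (θ : (Q.V → ℤ) →+ ℤ) (M : QRep Q)

/-- Total dimension (in `ℤ`) of a family of subspaces. -/
noncomputable def td (V : M.SubFam) : ℤ := ∑ i, (Module.finrank ℂ (V i) : ℤ)

/-- Relative slope of a pair of families. -/
noncomputable def rs (V W : M.SubFam) : ℚ := QRep.slope θ (QRep.dimZ W - QRep.dimZ V)

variable {M}

lemma sum_dimZ_sub (V W : M.SubFam) :
    (∑ i, (QRep.dimZ W - QRep.dimZ V) i) = td M W - td M V := by
  simp [QRep.dimZ, td, Finset.sum_sub_distrib]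

lemma rs_eq (V W : M.SubFam) :
    rs θ M V W = (θ (QRep.dimZ W - QRep.dimZ V) : ℚ) / ((td M W - td M V : ℤ) : ℚ) := by
  rw [rs, QRep.slope, sum_dimZ_sub]

lemma td_nonneg (V : M.SubFam) : 0 ≤ td M V := by
  refine Finset.sum_nonneg fun i _ => by positivity

lemma td_mono {V W : M.SubFam} (h : V ≤ W) : td M V ≤ td M W := by
  refine Finset.sum_le_sum fun i _ => ?_
  exact_mod_cast Submodule.finrank_mono (h i)

lemma td_strict {V W : M.SubFam} (h : V ≤ W) (hne : V ≠ W) : td M V < td M W := by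
  have : ∃ i, V i ≠ W i := by
    by_contra hc; push_neg at hc; exact hne (funext hc)
  obtain ⟨i, hi⟩ := this
  refine Finset.sum_lt_sum (fun j _ => by exact_mod_cast Submodule.finrank_mono (h j))
    ⟨i, Finset.mem_univ i, ?_⟩
  exact_mod_cast Submodule.finrank_lt_finrank_of_lt (lt_of_le_of_ne (h i) hi)

lemma eq_of_le_of_td_le {V W : M.SubFam} (h : V ≤ W) (h2 : td M W ≤ td M V) : V = W := by
  by_contra hne; exact absurd h2 (not_le.mpr (td_strict h hne))

lemma dimZ_sub_add {V Y W : M.SubFam} :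
    (QRep.dimZ Y - QRep.dimZ V) + (QRep.dimZ W - QRep.dimZ Y) = QRep.dimZ W - QRep.dimZ V := by
  abel

lemma rs_self (V : M.SubFam) : rs θ M V V = 0 := by
  simp [rs_eq]

/-- Modularity: the dimension vector of `(A ⊔ B)/B` equals that of `A/(A ⊓ B)`. -/
lemma dim_modular (A B : M.SubFam) :
    QRep.dimZ (A ⊔ B) - QRep.dimZ B = QRep.dimZ A - QRep.dimZ (A ⊓ B) := by
  funext i
  have := Submodule.finrank_sup_add_finrank_inf_eq (A i) (B i)
  simp only [Pi.sub_apply, QRep.dimZ]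
  have e1 : Module.finrank ℂ ((A ⊔ B) i) = Module.finrank ℂ ↥(A i ⊔ B i) := rfl
  have e2 : Module.finrank ℂ ((A ⊓ B) i) = Module.finrank ℂ ↥(A i ⊓ B i) := rfl
  omega

lemma rs_modular (A B : M.SubFam) : rs θ M B (A ⊔ B) = rs θ M (A ⊓ B) A := by
  rw [rs, rs, dim_modular]

/-! Seesaw wrappers.  In all of them `V ≤ Y ≤ W`. -/

section seesaw
variable {V Y W : M.SubFam}

private lemma den_pos {A C : M.SubFam} (h : A ≤ C) (hne : C ≠ A) :
    (0 : ℚ) < ((td M C - td M A : ℤ) : ℚ) := by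
  have := td_strict h (Ne.symm hne)
  exact_mod_cast by linarith

/-- combine two upper bounds. -/
lemma rs_le_of_le_of_le {c : ℚ} (hVY : V ≤ Y) (hYW : Y ≤ W) (hYV : Y ≠ V)
    (h1 : rs θ M V Y ≤ c) (h2 : rs θ M Y W ≤ c) : rs θ M V W ≤ c := by
  by_cases hWY : W = Y
  · rwa [hWY]
  rw [rs_eq] at h1 h2 ⊢
  have e1 : θ (QRep.dimZ W - QRep.dimZ V)
      = θ (QRep.dimZ Y - QRep.dimZ V) + θ (QRep.dimZ W - QRep.dimZ Y) := by
    rw [← map_add, dimZ_sub_add]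
  have e2 : ((td M W - td M V : ℤ) : ℚ)
      = ((td M Y - td M V : ℤ) : ℚ) + ((td M W - td M Y : ℤ) : ℚ) := by push_cast; ring
  rw [e1, e2, Int.cast_add]
  exact med_le_le (den_pos hVY hYV) (den_pos hYW hWY) h1 h2

lemma rs_lt_of_le_of_lt {c : ℚ} (hVY : V ≤ Y) (hYW : Y ≤ W) (hYV : Y ≠ V) (hWY : W ≠ Y)
    (h1 : rs θ M V Y ≤ c) (h2 : rs θ M Y W < c) : rs θ M V W < c := by
  rw [rs_eq] at h1 h2 ⊢
  have e1 : θ (QRep.dimZ W - QRep.dimZ V)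
      = θ (QRep.dimZ Y - QRep.dimZ V) + θ (QRep.dimZ W - QRep.dimZ Y) := by
    rw [← map_add, dimZ_sub_add]
  have e2 : ((td M W - td M V : ℤ) : ℚ)
      = ((td M Y - td M V : ℤ) : ℚ) + ((td M W - td M Y : ℤ) : ℚ) := by push_cast; ring
  rw [e1, e2, Int.cast_add]
  exact med_le_lt (den_pos hVY hYV) (den_pos hYW hWY) h1 h2

lemma le_rs_of_le_of_le {c : ℚ} (hVY : V ≤ Y) (hYW : Y ≤ W) (hYV : Y ≠ V) (hWY : W ≠ Y)
    (h1 : c ≤ rs θ M V Y) (h2 : c ≤ rs θ M Y W) : c ≤ rs θ M V W := by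
  rw [rs_eq] at h1 h2 ⊢
  have e1 : θ (QRep.dimZ W - QRep.dimZ V)
      = θ (QRep.dimZ Y - QRep.dimZ V) + θ (QRep.dimZ W - QRep.dimZ Y) := by
    rw [← map_add, dimZ_sub_add]
  have e2 : ((td M W - td M V : ℤ) : ℚ)
      = ((td M Y - td M V : ℤ) : ℚ) + ((td M W - td M Y : ℤ) : ℚ) := by push_cast; ring
  rw [e1, e2, Int.cast_add]
  exact le_med (den_pos hVY hYV) (den_pos hYW hWY) h1 h2

/-- If the top part is strictly below the total slope, the bottom part is strictly above it. -/
lemma rs_left_gt (hVY : V ≤ Y) (hYW : Y ≤ W) (hYV : Y ≠ V) (hWY : W ≠ Y)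
    (h2 : rs θ M Y W < rs θ M V W) : rs θ M V W < rs θ M V Y := by
  have e1 : θ (QRep.dimZ W - QRep.dimZ V)
      = θ (QRep.dimZ Y - QRep.dimZ V) + θ (QRep.dimZ W - QRep.dimZ Y) := by
    rw [← map_add, dimZ_sub_add]
  have e2 : ((td M W - td M V : ℤ) : ℚ)
      = ((td M Y - td M V : ℤ) : ℚ) + ((td M W - td M Y : ℤ) : ℚ) := by push_cast; ring
  rw [rs_eq] at h2 ⊢
  rw [rs_eq, e1, e2, Int.cast_add] at h2 ⊢
  exact left_gt_of_right_lt (den_pos hVY hYV) (den_pos hYW hWY) h2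

/-- Seesaw: if the bottom part is at most the total, the total is at most the top part. -/
lemma rs_right_ge (hVY : V ≤ Y) (hYW : Y ≤ W) (hWY : W ≠ Y)
    (h1 : rs θ M V Y ≤ rs θ M V W) : rs θ M V W ≤ rs θ M Y W := by
  by_cases hYV : Y = V
  · subst hYV; exact le_rfl
  have e1 : θ (QRep.dimZ W - QRep.dimZ V)
      = θ (QRep.dimZ Y - QRep.dimZ V) + θ (QRep.dimZ W - QRep.dimZ Y) := by
    rw [← map_add, dimZ_sub_add]
  have e2 : ((td M W - td M V : ℤ) : ℚ)
      = ((td M Y - td M V : ℤ) : ℚ) + ((td M W - td M Y : ℤ) : ℚ) := by push_cast; ring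
  rw [rs_eq] at h1 ⊢
  rw [rs_eq, e1, e2, Int.cast_add] at h1 ⊢
  exact med_le_right_of_left_le (den_pos hVY hYV) (den_pos hYW hWY) h1

end seesaw

end Basic
end SHN
namespace SHN
section Max
variable {Q : FinQuiver} (θ : (Q.V → ℤ) →+ ℤ) {M : QRep Q}

lemma isSubRep_bot : M.IsSubRep ⊥ := by
  intro a x hx
  have : x = 0 := hx
  simp [this]

lemma isSubRep_top : M.IsSubRep ⊤ := fun a x _ => trivial

lemma isSubRep_sup {A B : M.SubFam} (hA : M.IsSubRep A) (hB : M.IsSubRep B) :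
    M.IsSubRep (A ⊔ B) := by
  intro a x hx
  have hx' : x ∈ A (Q.src a) ⊔ B (Q.src a) := hx
  obtain ⟨u, hu, v, hv, rfl⟩ := Submodule.mem_sup.mp hx'
  have : M.map a u + M.map a v ∈ A (Q.tgt a) ⊔ B (Q.tgt a) :=
    Submodule.add_mem_sup (hA a u hu) (hB a v hv)
  simpa using this

lemma isSubRep_inf {A B : M.SubFam} (hA : M.IsSubRep A) (hB : M.IsSubRep B) :
    M.IsSubRep (A ⊓ B) := by
  intro a x hx
  exact ⟨hA a x hx.1, hB a x hx.2⟩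

/-- Choice of a maximizer of a function factoring through dimension vectors. -/
lemma exists_argmax {γ : Type} [LinearOrder γ] (f : M.SubFam → γ)
    (g : (Q.V → ℕ) → γ) (hf : ∀ V, f V = g (fun i => Module.finrank ℂ (V i)))
    (P : M.SubFam → Prop) (hne : ∃ V, P V) :
    ∃ V, P V ∧ ∀ W, P W → f W ≤ f V := by
  classical
  set S : Set γ := f '' {V | P V} with hS
  have hfin : S.Finite := by
    have hsub : S ⊆ g '' (Set.pi Set.univ fun i => Set.Iic (Module.finrank ℂ (M.carrier i))) := by
      rintro x ⟨V, hV, rfl⟩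
      exact ⟨_, fun i _ => Submodule.finrank_le (V i), (hf V).symm⟩
    exact Set.Finite.subset (Set.Finite.image g
      (Set.Finite.pi fun i => Set.finite_Iic _)) hsub
  have hSne : S.Nonempty := by
    obtain ⟨V, hV⟩ := hne; exact ⟨f V, V, hV, rfl⟩
  obtain ⟨b, ⟨V, hV, rfl⟩, hmax⟩ := Set.exists_max_image S id hfin hSne
  exact ⟨V, hV, fun W hW => hmax _ ⟨W, hW, rfl⟩⟩

/-- Existence of the maximal destabilizing subrepresentation between `V` and `T`. -/
lemma exists_maxdest {V T : M.SubFam} (hVT : V ≤ T) (hne : V ≠ T) (hT : M.IsSubRep T) :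
    ∃ Y, M.IsSubRep Y ∧ V ≤ Y ∧ Y ≤ T ∧ Y ≠ V ∧
      (∀ Z, M.IsSubRep Z → V ≤ Z → Z ≤ T → Z ≠ V → rs θ M V Z ≤ rs θ M V Y) ∧
      (∀ Z, M.IsSubRep Z → V ≤ Z → Z ≤ T → Z ≠ V → rs θ M V Z = rs θ M V Y →
        td M Z ≤ td M Y) := by
  classical
  set P : M.SubFam → Prop := fun Z => M.IsSubRep Z ∧ V ≤ Z ∧ Z ≤ T ∧ Z ≠ V with hP
  have hPne : ∃ Z, P Z := ⟨T, hT, hVT, le_rfl, Ne.symm hne⟩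
  obtain ⟨Y1, hY1, hmax1⟩ := exists_argmax (fun Z => rs θ M V Z)
    (fun d => QRep.slope θ (fun i => (d i : ℤ) - QRep.dimZ V i))
    (fun Z => rfl) P hPne
  set q := rs θ M V Y1 with hq
  obtain ⟨Y, hY, hmax2⟩ := exists_argmax (fun Z => td M Z)
    (fun d => ∑ i, (d i : ℤ)) (fun Z => rfl)
    (fun Z => P Z ∧ rs θ M V Z = q) ⟨Y1, hY1, rfl⟩
  obtain ⟨⟨hYsub, hVY, hYT, hYne⟩, hYq⟩ := hY
  refine ⟨Y, hYsub, hVY, hYT, hYne, fun Z hZ h1 h2 h3 => ?_, fun Z hZ h1 h2 h3 h4 => ?_⟩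
  · exact le_trans (hmax1 Z ⟨hZ, h1, h2, h3⟩) (le_of_eq hYq.symm)
  · exact hmax2 Z ⟨⟨hZ, h1, h2, h3⟩, by rw [h4, hYq]⟩

/-- Any strictly bigger subrepresentation has relative slope strictly less than
the maximal destabilizer's slope. -/
lemma maxdest_later {V T Y : M.SubFam} (hVY : V ≤ Y) (hYne : Y ≠ V)
    (hmax1 : ∀ Z, M.IsSubRep Z → V ≤ Z → Z ≤ T → Z ≠ V → rs θ M V Z ≤ rs θ M V Y)
    (hmax2 : ∀ Z, M.IsSubRep Z → V ≤ Z → Z ≤ T → Z ≠ V → rs θ M V Z = rs θ M V Y →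
        td M Z ≤ td M Y)
    {Z : M.SubFam} (hZ : M.IsSubRep Z) (h1 : Y ≤ Z) (h2 : Z ≤ T) (h3 : Z ≠ Y) :
    rs θ M Y Z < rs θ M V Y := by
  by_contra hc
  push_neg at hc
  have hZV : Z ≠ V := by
    intro h; subst h
    exact hYne (le_antisymm h1 hVY)
  have hub : rs θ M V Z ≤ rs θ M V Y := hmax1 Z hZ (le_trans hVY h1) h2 hZV
  have hlb : rs θ M V Y ≤ rs θ M V Z :=
    le_rs_of_le_of_le θ hVY h1 hYne h3 le_rfl hc
  have heq : rs θ M V Z = rs θ M V Y := le_antisymm hub hlb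
  have := hmax2 Z hZ (le_trans hVY h1) h2 hZV heq
  exact absurd (td_strict h1 (Ne.symm h3)) (not_lt.mpr this)

end Max
end SHN
namespace SHN
section HN
variable {Q : FinQuiver} (θ : (Q.V → ℤ) →+ ℤ) (M : QRep Q)

/-- A Harder–Narasimhan chain from `V` to `⊤`, of length `s`, indexed by `ℕ`. -/
structure HNChain (V : M.SubFam) (s : ℕ) (F : ℕ → M.SubFam) : Prop where
  sub : ∀ k, k ≤ s → M.IsSubRep (F k)
  zero : F 0 = V
  top : F s = ⊤
  le : ∀ k, k < s → F k ≤ F (k+1)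
  ne : ∀ k, k < s → F k ≠ F (k+1)
  ss : ∀ k, k < s → QRep.SubquotSemistable θ M (F k) (F (k+1))
  dec : ∀ k l, k < l → l < s → rs θ M (F l) (F (l+1)) < rs θ M (F k) (F (k+1))

variable {θ M}
variable {V : M.SubFam} {s : ℕ} {F : ℕ → M.SubFam}

lemma HNChain.mono (h : HNChain θ M V s F) :
    ∀ {k l}, k ≤ l → l ≤ s → F k ≤ F l := by
  intro k l
  induction l with
  | zero => intro hkl _; rw [Nat.le_zero.mp hkl]
  | succ n ih =>
      intro hkl hls
      rcases Nat.lt_or_ge k (n+1) with h1 | h1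
      · exact le_trans (ih (Nat.lt_succ_iff.mp h1) (by omega)) (h.le n (by omega))
      · rw [Nat.le_antisymm hkl h1]

lemma HNChain.dec_weak (h : HNChain θ M V s F) {k l : ℕ} (hkl : k ≤ l) (hls : l < s) :
    rs θ M (F l) (F (l+1)) ≤ rs θ M (F k) (F (k+1)) := by
  rcases eq_or_lt_of_le hkl with rfl | hlt
  · exact le_rfl
  · exact le_of_lt (h.dec k l hlt hls)

lemma HNChain.shift (h : HNChain θ M V s F) {k : ℕ} (hk : k ≤ s) :
    HNChain θ M (F k) (s - k) (fun l => F (k + l)) where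
  sub l hl := h.sub (k+l) (by omega)
  zero := by simp
  top := by rw [show k + (s - k) = s by omega, h.top]
  le l hl := by rw [show k + (l+1) = k + l + 1 by omega]; exact h.le (k+l) (by omega)
  ne l hl := by rw [show k + (l+1) = k + l + 1 by omega]; exact h.ne (k+l) (by omega)
  ss l hl := by rw [show k + (l+1) = k + l + 1 by omega]; exact h.ss (k+l) (by omega)
  dec l l' hll' hl' := by
    rw [show k + (l+1) = k + l + 1 by omega, show k + (l'+1) = k + l' + 1 by omega]
    exact h.dec (k+l) (k+l') (by omega) (by omega)

/-- Existence of HN chains. -/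
lemma hn_exists_aux : ∀ n : ℕ, ∀ V : M.SubFam, M.IsSubRep V → td M ⊤ - td M V ≤ (n : ℤ) →
    ∃ s F, HNChain θ M V s F := by
  intro n
  induction n with
  | zero =>
      intro V hV hVn
      have : V = ⊤ := eq_of_le_of_td_le le_top (by omega)
      exact ⟨0, fun _ => V, ⟨fun k _ => hV, rfl, this, by omega, by omega, by omega, by omega⟩⟩
  | succ n ih =>
      intro V hV hVn
      by_cases hVtop : V = ⊤
      · exact ⟨0, fun _ => V, ⟨fun k _ => hV, rfl, hVtop, by omega, by omega, by omega, by omega⟩⟩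
      obtain ⟨Y, hYsub, hVY, hYle, hYne, hmax1, hmax2⟩ :=
        exists_maxdest θ (le_top : V ≤ ⊤) hVtop isSubRep_top
      obtain ⟨s', F', hF'⟩ := ih Y hYsub (by have := td_strict hVY (Ne.symm hYne); omega)
      refine ⟨s' + 1, fun k => if k = 0 then V else F' (k-1), ?_⟩
      have hF'0 : F' 0 = Y := hF'.zero
      constructor
      · intro k hk
        by_cases h0 : k = 0
        · simpa [h0] using hV
        · simpa [h0] using hF'.sub (k-1) (by omega)
      · simp
      · simpa using hF'.top
      · intro k hk
        by_cases h0 : k = 0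
        · subst h0; simpa [hF'0] using hVY
        · simpa [h0, show k - 1 + 1 = k by omega, show (k : ℕ) + 1 ≠ 0 by omega]
            using hF'.le (k-1) (by omega)
      · intro k hk
        by_cases h0 : k = 0
        · subst h0; simpa [hF'0] using (Ne.symm hYne)
        · simpa [h0, show k - 1 + 1 = k by omega, show (k : ℕ) + 1 ≠ 0 by omega]
            using hF'.ne (k-1) (by omega)
      · intro k hk
        by_cases h0 : k = 0
        · subst h0
          simp only [if_pos rfl, if_neg (by omega : (1:ℕ) ≠ 0)]
          rw [show (1:ℕ) - 1 = 0 from rfl, hF'0]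
          intro Z hZ h1 h2 h3
          exact hmax1 Z hZ h1 (le_trans h2 le_top) h3
        · simpa [h0, show k - 1 + 1 = k by omega, show (k : ℕ) + 1 ≠ 0 by omega]
            using hF'.ss (k-1) (by omega)
      · intro k l hkl hls
        have hfirst : ∀ m, 0 < m → m < s' + 1 →
            rs θ M (if m = 0 then V else F' (m-1)) (if m + 1 = 0 then V else F' (m+1-1))
              < rs θ M V (F' 0) := by
          intro m hm hms
          simp only [if_neg (by omega : m ≠ 0), if_neg (by omega : m + 1 ≠ 0)]
          rw [show m + 1 - 1 = (m-1) + 1 by omega]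
          have hstep : rs θ M (F' (m-1)) (F' (m-1+1)) ≤ rs θ M (F' 0) (F' 1) :=
            hF'.dec_weak (by omega) (by omega)
          have hlater : rs θ M (F' 0) (F' 1) < rs θ M V (F' 0) := by
            rw [hF'0]
            exact maxdest_later θ hVY hYne hmax1 hmax2 (hF'.sub 1 (by omega))
              (hF'0 ▸ hF'.le 0 (by omega)) le_top (hF'0 ▸ Ne.symm (hF'.ne 0 (by omega)))
          exact lt_of_le_of_lt hstep hlater
        by_cases h0 : k = 0
        · subst h0
          simpa [show l ≠ 0 by omega, show l + 1 ≠ 0 by omega, hF'0]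
            using hfirst l (by omega) hls
        · have : rs θ M (F' (l-1)) (F' (l-1+1)) < rs θ M (F' (k-1)) (F' (k-1+1)) :=
            hF'.dec (k-1) (l-1) (by omega) (by omega)
          simpa [h0, show l ≠ 0 by omega, show k + 1 ≠ 0 by omega, show l + 1 ≠ 0 by omega,
            show k - 1 + 1 = k by omega, show l - 1 + 1 = l by omega] using this
  
lemma hn_exists (V : M.SubFam) (hV : M.IsSubRep V) : ∃ s F, HNChain θ M V s F :=
  hn_exists_aux (td M ⊤).toNat V hV (by have := td_nonneg (M := M) V; omega)

end HN
end SHN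
namespace SHN
section HNU
variable {Q : FinQuiver} {θ : (Q.V → ℤ) →+ ℤ} {M : QRep Q}
variable {V : M.SubFam} {s : ℕ} {F : ℕ → M.SubFam}

/-- Lemma A: the first HN slope bounds the slope of every subrepresentation,
with equality only for subobjects of the first step. -/
lemma HNChain.lemmaA (h : HNChain θ M V s F) (hs : 0 < s) :
    ∀ j, j ≤ s → ∀ Y : M.SubFam, M.IsSubRep Y → V ≤ Y → Y ≤ F j → Y ≠ V →
      rs θ M V Y ≤ rs θ M (F 0) (F 1) ∧
      (rs θ M V Y = rs θ M (F 0) (F 1) → Y ≤ F 1) := by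
  intro j
  induction j with
  | zero =>
      intro _ Y _ hVY hYF hne
      rw [h.zero] at hYF
      exact absurd (le_antisymm hYF hVY) hne
  | succ j ih =>
      intro hj Y hYsub hVY hYF hne
      by_cases hYj : Y ≤ F j
      · exact ih (by omega) Y hYsub hVY hYj hne
      -- Y is not inside F j
      have hFj := h.sub j (by omega)
      set Z : M.SubFam := Y ⊓ F j with hZ
      set S : M.SubFam := Y ⊔ F j with hSdef
      have hSne : S ≠ F j := by
        intro hS
        exact hYj (le_trans le_sup_left (le_of_eq hS))
      have hSFj1 : S ≤ F (j+1) := sup_le hYF (h.le j (by omega))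
      have hSsub : M.IsSubRep S := isSubRep_sup hYsub hFj
      have hbound : rs θ M (F j) S ≤ rs θ M (F j) (F (j+1)) :=
        h.ss j (by omega) S hSsub le_sup_right hSFj1 hSne
      have htransfer : rs θ M Z Y = rs θ M (F j) S := by
        rw [rs, rs, dim_modular]
      by_cases hj0 : j = 0
      · subst hj0
        have hZV : Z = V := by rw [hZ, h.zero]; exact inf_eq_right.mpr hVY
        constructor
        · calc rs θ M V Y = rs θ M (F 0) S := by rw [← hZV, htransfer]
            _ ≤ rs θ M (F 0) (F 1) := hbound
        · intro _; exact hYF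
      · -- j ≥ 1
        have hstrict : rs θ M (F j) (F (j+1)) < rs θ M (F 0) (F 1) :=
          h.dec 0 j (by omega) (by omega)
        have hZY : rs θ M Z Y < rs θ M (F 0) (F 1) := by
          rw [htransfer]; exact lt_of_le_of_lt hbound hstrict
        have hVZ : V ≤ Z := le_inf hVY (h.zero ▸ h.mono (by omega) (by omega))
        have hZYle : Z ≤ Y := inf_le_left
        have hZYne : Z ≠ Y := by
          intro hc
          exact hYj (hc ▸ inf_le_right)
        by_cases hZV : Z = V
        · rw [hZV] at hZY hZYle hZYne
          constructor
          · exact le_of_lt hZY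
          · intro hc; exact absurd hc (ne_of_lt hZY)
        · have hZbound := ih (by omega) Z (isSubRep_inf hYsub hFj) hVZ inf_le_right hZV
          have : rs θ M V Y < rs θ M (F 0) (F 1) :=
            rs_lt_of_le_of_lt θ hVZ hZYle hZV (Ne.symm hZYne) hZbound.1 hZY
          exact ⟨le_of_lt this, fun hc => absurd hc (ne_of_lt this)⟩

/-- Global form of Lemma A. -/
lemma HNChain.maxslope (h : HNChain θ M V s F) (hs : 0 < s)
    {Y : M.SubFam} (hYsub : M.IsSubRep Y) (hVY : V ≤ Y) (hne : Y ≠ V) :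
    rs θ M V Y ≤ rs θ M (F 0) (F 1) ∧
    (rs θ M V Y = rs θ M (F 0) (F 1) → Y ≤ F 1) :=
  h.lemmaA hs s le_rfl Y hYsub hVY (h.top ▸ le_top) hne

/-- Uniqueness of HN chains. -/
lemma hn_unique : ∀ s, ∀ (V : M.SubFam) (F : ℕ → M.SubFam) (s' : ℕ) (F' : ℕ → M.SubFam),
    HNChain θ M V s F → HNChain θ M V s' F' → s = s' ∧ ∀ k, k ≤ s → F k = F' k := by
  intro s
  induction s with
  | zero =>
      intro V F s' F' h h'
      have hVtop : V = ⊤ := h.zero ▸ h.top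
      rcases Nat.eq_zero_or_pos s' with rfl | hs'
      · exact ⟨rfl, fun k hk => by rw [Nat.le_zero.mp hk, h.zero, h'.zero]⟩
      · exfalso
        have h1 : F' 0 = ⊤ := h'.zero.trans hVtop
        have h2 : F' 0 ≤ F' 1 := h'.le 0 hs'
        exact h'.ne 0 hs' (le_antisymm h2 (h1 ▸ le_top))
  | succ n ih =>
      intro V F s' F' h h'
      have hVne : V ≠ ⊤ := by
        intro hc
        have h1 : F 0 ≤ F 1 := h.le 0 (by omega)
        exact h.ne 0 (by omega) (le_antisymm h1 (h.zero ▸ hc ▸ le_top))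
      rcases Nat.eq_zero_or_pos s' with rfl | hs'
      · exact absurd (h'.zero ▸ h'.top) hVne
      -- first steps agree
      have hVF'1 : V ≤ F' 1 := by rw [← h'.zero]; exact h'.le 0 hs'
      have hF'1V : F' 1 ≠ V := by rw [← h'.zero]; exact Ne.symm (h'.ne 0 hs')
      have hVF1 : V ≤ F 1 := by rw [← h.zero]; exact h.le 0 (by omega)
      have hF1V : F 1 ≠ V := by rw [← h.zero]; exact Ne.symm (h.ne 0 (by omega))
      have A1 := h.maxslope (by omega) (h'.sub 1 hs') hVF'1 hF'1V
      have A2 := h'.maxslope hs' (h.sub 1 (by omega)) hVF1 hF1V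
      have e1 : rs θ M V (F' 1) = rs θ M (F' 0) (F' 1) := by rw [h'.zero]
      have e2 : rs θ M V (F 1) = rs θ M (F 0) (F 1) := by rw [h.zero]
      have hq : rs θ M (F 0) (F 1) = rs θ M (F' 0) (F' 1) :=
        le_antisymm (e2 ▸ A2.1) (e1 ▸ A1.1)
      have hF1 : F 1 = F' 1 :=
        le_antisymm (A2.2 (by rw [e2, hq])) (A1.2 (by rw [e1, ← hq]))
      -- tails
      obtain ⟨m', rfl⟩ : ∃ m', s' = m' + 1 := ⟨s' - 1, by omega⟩
      have htail : HNChain θ M (F 1) n (fun k => F (k+1)) := by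
        have := h.shift (k := 1) (by omega)
        simpa [Nat.add_comm] using this
      have htail' : HNChain θ M (F 1) m' (fun k => F' (k+1)) := by
        have := h'.shift (k := 1) (by omega)
        rw [← hF1] at this
        simpa [Nat.add_comm] using this
      obtain ⟨hsm, hk⟩ := ih (F 1) (fun k => F (k+1)) m' (fun k => F' (k+1)) htail htail'
      refine ⟨by omega, fun k hks => ?_⟩
      rcases Nat.eq_zero_or_pos k with rfl | hkpos
      · rw [h.zero, h'.zero]
      · have := hk (k-1) (by omega)
        simpa [show k - 1 + 1 = k by omega] using this

end HNU
end SHN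
namespace SHN
section Orth
open QRep Module
variable {Q : FinQuiver} {σ : QInv Q} {D : Duality Q σ} {θ : (Q.V → ℤ) →+ ℤ}
variable {M : QRep Q} {B : M.Bilin}

lemma mem_cast {i j : Q.V} (h : i = j) (U : M.SubFam) (x : M.carrier i) :
    M.castEquiv h x ∈ U j ↔ x ∈ U i := by subst h; rfl

lemma single_cast {i j : Q.V} (h : i = j) (x : M.carrier i) :
    Pi.single j (M.castEquiv h x) = Pi.single i x := by subst h; rfl

lemma mem_orthFam {U : M.SubFam} {i : Q.V} {m : M.carrier i} :
    m ∈ QRep.orthFam σ M B U i ↔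
      ∀ y ∈ U (σ.onV i), B (Pi.single i m) (Pi.single (σ.onV i) y) = 0 := by
  simp only [QRep.orthFam, Submodule.mem_iInf, LinearMap.mem_ker, LinearMap.flip_apply,
    LinearMap.comp_apply, LinearMap.single_apply]
  constructor
  · intro h y hy; exact h ⟨y, hy⟩
  · intro h y; exact h y y.2

lemma block_eq_zero (hB : QRep.IsSelfDualForm σ D M B) {i : Q.V} (x : M.carrier i)
    (hx : ∀ y : M.carrier (σ.onV i), B (Pi.single i x) (Pi.single (σ.onV i) y) = 0) :
    x = 0 := by
  have hz : ∀ z, B (Pi.single i x) z = 0 := by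
    intro z
    have hzdec : z = ∑ j, Pi.single j (z j) := (Finset.univ_sum_single z).symm
    rw [hzdec, map_sum]
    refine Finset.sum_eq_zero fun j _ => ?_
    by_cases hj : j = σ.onV i
    · subst hj; exact hx (z (σ.onV i))
    · exact hB.2.1 i j hj x (z j)
  have h0 := hB.1 (Pi.single i x) hz
  have h1 := congrFun h0 i
  simpa using h1

/-- The pairing `M_i → (M_{σ i})^*`. -/
noncomputable def phiB (σ : QInv Q) (B : M.Bilin) (i : Q.V) :
    M.carrier i →ₗ[ℂ] Module.Dual ℂ (M.carrier (σ.onV i)) :=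
  (B.comp (LinearMap.single ℂ M.carrier i)).compl₂ (LinearMap.single ℂ M.carrier (σ.onV i))

lemma phiB_apply (i : Q.V) (x : M.carrier i) (y : M.carrier (σ.onV i)) :
    phiB σ B i x y = B (Pi.single i x) (Pi.single (σ.onV i) y) := rfl

lemma phiB_injective (hB : QRep.IsSelfDualForm σ D M B) (i : Q.V) :
    Function.Injective (phiB σ B i) := by
  rw [← LinearMap.ker_eq_bot, LinearMap.ker_eq_bot']
  intro x hx
  refine block_eq_zero hB x fun y => ?_
  have := congrFun (congrArg DFunLike.coe hx) y
  simpa [phiB_apply] using this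

lemma finrank_sigma (hB : QRep.IsSelfDualForm σ D M B) (i : Q.V) :
    finrank ℂ (M.carrier (σ.onV i)) = finrank ℂ (M.carrier i) := by
  have h1 : ∀ j, finrank ℂ (M.carrier j) ≤ finrank ℂ (M.carrier (σ.onV j)) := fun j => by
    have := LinearMap.finrank_le_finrank_of_injective (phiB_injective hB j)
    rwa [Subspace.dual_finrank_eq] at this
  have h2 := h1 (σ.onV i)
  rw [σ.invV i] at h2
  exact le_antisymm h2 (h1 i)

lemma phiB_surjective (hB : QRep.IsSelfDualForm σ D M B) (i : Q.V) :
    Function.Surjective (phiB σ B i) := by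
  have he : finrank ℂ (M.carrier i) = finrank ℂ (Module.Dual ℂ (M.carrier (σ.onV i))) := by
    rw [Subspace.dual_finrank_eq, finrank_sigma hB i]
  exact (LinearMap.injective_iff_surjective_of_finrank_eq_finrank he).mp (phiB_injective hB i)

lemma finrank_orth (hB : QRep.IsSelfDualForm σ D M B) (U : M.SubFam) (i : Q.V) :
    finrank ℂ (QRep.orthFam σ M B U i) + finrank ℂ (U (σ.onV i))
      = finrank ℂ (M.carrier i) := by
  classical
  set ψ : M.carrier i →ₗ[ℂ] Module.Dual ℂ (U (σ.onV i)) :=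
    ((U (σ.onV i)).subtype.dualMap).comp (phiB σ B i) with hψ
  have hker : LinearMap.ker ψ = QRep.orthFam σ M B U i := by
    ext m
    rw [LinearMap.mem_ker, mem_orthFam]
    constructor
    · intro h y hy
      have := congrFun (congrArg DFunLike.coe h) ⟨y, hy⟩
      simpa [hψ, phiB_apply] using this
    · intro h
      refine LinearMap.ext fun y => ?_
      simpa [hψ, phiB_apply] using h y y.2
  have hsurj : Function.Surjective ψ :=
    (LinearMap.dualMap_surjective_of_injective (Submodule.injective_subtype _)).comp
      (phiB_surjective hB i)
  have hrank := LinearMap.finrank_range_add_finrank_ker ψ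
  rw [hker, LinearMap.range_eq_top.mpr hsurj, finrank_top, Subspace.dual_finrank_eq] at hrank
  omega

lemma orth_antitone {U W : M.SubFam} (h : U ≤ W) :
    QRep.orthFam σ M B W ≤ QRep.orthFam σ M B U := by
  intro i m hm
  rw [mem_orthFam] at hm ⊢
  exact fun y hy => hm y (h _ hy)

lemma orth_bot : QRep.orthFam σ M B (⊥ : M.SubFam) = ⊤ := by
  funext i
  have e : (⊤ : M.SubFam) i = (⊤ : Submodule ℂ (M.carrier i)) := rfl
  rw [e, Submodule.eq_top_iff']
  intro m
  rw [mem_orthFam]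
  intro y hy
  have : y = 0 := hy
  simp [this]

lemma orth_top (hB : QRep.IsSelfDualForm σ D M B) :
    QRep.orthFam σ M B (⊤ : M.SubFam) = ⊥ := by
  funext i
  have e : (⊥ : M.SubFam) i = (⊥ : Submodule ℂ (M.carrier i)) := rfl
  rw [e, Submodule.eq_bot_iff]
  intro m hm
  rw [mem_orthFam] at hm
  exact block_eq_zero hB m fun y => hm y trivial

lemma le_double_orth (hB : QRep.IsSelfDualForm σ D M B) (U : M.SubFam) :
    U ≤ QRep.orthFam σ M B (QRep.orthFam σ M B U) := by
  intro i x hx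
  rw [mem_orthFam]
  intro y hy
  rw [mem_orthFam] at hy
  have hz : M.castEquiv (σ.invV i).symm x ∈ U (σ.onV (σ.onV i)) :=
    (mem_cast (σ.invV i).symm U x).mpr hx
  have h0 := hy _ hz
  rw [single_cast ((σ.invV i).symm) x] at h0
  rw [hB.2.2.1 i x y, h0, mul_zero]

lemma double_orth (hB : QRep.IsSelfDualForm σ D M B) (U : M.SubFam) :
    QRep.orthFam σ M B (QRep.orthFam σ M B U) = U := by
  funext i
  refine (Submodule.eq_of_le_of_finrank_le (le_double_orth hB U i) ?_).symm
  have h1 := finrank_orth hB (QRep.orthFam σ M B U) i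
  have h2 := finrank_orth hB U (σ.onV i)
  have h3 := finrank_sigma hB i
  have h4 : finrank ℂ (U (σ.onV (σ.onV i))) = finrank ℂ (U i) := by rw [σ.invV i]
  omega

lemma orth_sup (A C : M.SubFam) :
    QRep.orthFam σ M B (A ⊔ C) = QRep.orthFam σ M B A ⊓ QRep.orthFam σ M B C := by
  refine le_antisymm (le_inf (orth_antitone le_sup_left) (orth_antitone le_sup_right)) ?_
  intro i m hm
  have hm1 : m ∈ QRep.orthFam σ M B A i := hm.1
  have hm2 : m ∈ QRep.orthFam σ M B C i := hm.2
  rw [mem_orthFam] at hm1 hm2 ⊢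
  intro y hy
  have hy' : y ∈ A (σ.onV i) ⊔ C (σ.onV i) := hy
  obtain ⟨a, ha, c, hc, rfl⟩ := Submodule.mem_sup.mp hy'
  rw [Pi.single_add, map_add, hm1 a ha, hm2 c hc, add_zero]

lemma orth_isSubRep (hB : QRep.IsSelfDualForm σ D M B) {U : M.SubFam}
    (hU : M.IsSubRep U) : M.IsSubRep (QRep.orthFam σ M B U) := by
  intro a x hx
  rw [mem_orthFam] at hx ⊢
  intro y hy
  have hz1 : M.castEquiv (σ.src_onA a).symm y ∈ U (Q.src (σ.onA a)) :=
    (mem_cast (σ.src_onA a).symm U y).mpr hy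
  set w := M.map (σ.onA a) (M.castEquiv (σ.src_onA a).symm y) with hw
  have hz2 : w ∈ U (Q.tgt (σ.onA a)) := hU (σ.onA a) _ hz1
  have hz3 : M.castEquiv (σ.tgt_onA a) w ∈ U (σ.onV (Q.src a)) :=
    (mem_cast (σ.tgt_onA a) U w).mpr hz2
  have h2 : Pi.single (Q.tgt (σ.onA a)) w
      = Pi.single (σ.onV (Q.src a)) (M.castEquiv (σ.tgt_onA a) w) :=
    (single_cast (σ.tgt_onA a) w).symm
  rw [hB.2.2.2 a x y, ← hw, h2, hx _ hz3, mul_zero]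

lemma theta_dimM (hθ : QRep.SigmaCompatible σ θ) (hB : QRep.IsSelfDualForm σ D M B) :
    θ M.dimVecZ = 0 := by
  have h1 := hθ M.dimVecZ
  have h2 : (fun i => M.dimVecZ (σ.onV i)) = M.dimVecZ := by
    funext i; simp [QRep.dimVecZ, finrank_sigma hB i]
  rw [h2] at h1
  omega

lemma rs_orth (hθ : QRep.SigmaCompatible σ θ) (hB : QRep.IsSelfDualForm σ D M B)
    (A C : M.SubFam) :
    rs θ M (QRep.orthFam σ M B C) (QRep.orthFam σ M B A) = - rs θ M A C := by
  have hvec : QRep.dimZ (QRep.orthFam σ M B A) - QRep.dimZ (QRep.orthFam σ M B C)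
      = fun i => (QRep.dimZ C - QRep.dimZ A) (σ.onV i) := by
    funext i
    have h1 := finrank_orth hB A i
    have h2 := finrank_orth hB C i
    simp only [Pi.sub_apply, QRep.dimZ]
    omega
  rw [rs, rs, QRep.slope, QRep.slope, hvec, hθ (QRep.dimZ C - QRep.dimZ A)]
  have hden : ∑ i, (QRep.dimZ C - QRep.dimZ A) (σ.onV i)
      = ∑ i, (QRep.dimZ C - QRep.dimZ A) i :=
    Fintype.sum_equiv ⟨σ.onV, σ.onV, σ.invV, σ.invV⟩ _ _ (fun i => rfl)
  rw [hden, Int.cast_neg, neg_div]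

lemma rs_orth_self (hθ : QRep.SigmaCompatible σ θ) (hB : QRep.IsSelfDualForm σ D M B)
    (A : M.SubFam) : rs θ M A (QRep.orthFam σ M B A) = 0 := by
  rw [rs_eq]
  have h0 : θ (QRep.dimZ (QRep.orthFam σ M B A) - QRep.dimZ A) = 0 := by
    have hvec : QRep.dimZ (QRep.orthFam σ M B A) - QRep.dimZ A
        = M.dimVecZ - (fun i => QRep.dimZ A (σ.onV i)) - QRep.dimZ A := by
      funext i
      have := finrank_orth hB A i
      simp only [Pi.sub_apply, QRep.dimZ, QRep.dimVecZ]
      omega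
    rw [hvec, map_sub, map_sub, theta_dimM hθ hB, hθ (QRep.dimZ A)]
    ring
  rw [h0]
  simp

lemma rs_inf_orth_zero (hθ : QRep.SigmaCompatible σ θ) (hB : QRep.IsSelfDualForm σ D M B)
    (Y : M.SubFam) : rs θ M (Y ⊓ QRep.orthFam σ M B Y) Y = 0 := by
  have h1 : rs θ M (Y ⊓ QRep.orthFam σ M B Y) Y
      = rs θ M (QRep.orthFam σ M B Y) (Y ⊔ QRep.orthFam σ M B Y) := by
    rw [rs, rs, dim_modular]
  have e2 : QRep.orthFam σ M B (Y ⊔ QRep.orthFam σ M B Y) = Y ⊓ QRep.orthFam σ M B Y := by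
    rw [orth_sup, double_orth hB Y, inf_comm]
  have h2 := rs_orth hθ hB (QRep.orthFam σ M B Y) (Y ⊔ QRep.orthFam σ M B Y)
  rw [e2, double_orth hB Y] at h2
  -- h2 : rs (Y ⊓ orth Y) Y = - rs (orth Y) (Y ⊔ orth Y)
  rw [h1] at h2 ⊢
  linarith

lemma middle_ss (hθ : QRep.SigmaCompatible σ θ) (hB : QRep.IsSelfDualForm σ D M B)
    {V : M.SubFam} (hq : QRep.SigmaSemistableQuot σ θ M B V) :
    ∀ Y, M.IsSubRep Y → V ≤ Y → Y ≤ QRep.orthFam σ M B V → Y ≠ V → rs θ M V Y ≤ 0 := by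
  by_contra hc
  push_neg at hc
  obtain ⟨Y0, hY0sub, h1, h2, h3, h4⟩ := hc
  set P : M.SubFam → Prop := fun Z =>
    M.IsSubRep Z ∧ V ≤ Z ∧ Z ≤ QRep.orthFam σ M B V ∧ Z ≠ V ∧ 0 < rs θ M V Z with hP
  obtain ⟨Y, hYP, hmax⟩ := exists_argmax (fun Z => rs θ M V Z)
    (fun d => QRep.slope θ (fun i => (d i : ℤ) - QRep.dimZ V i)) (fun Z => rfl) P
    ⟨Y0, hY0sub, h1, h2, h3, h4⟩
  obtain ⟨hYsub, hVY, hYoV, hYneV, hYpos⟩ := hYP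
  have hVO : V ≤ QRep.orthFam σ M B Y := by
    have := orth_antitone (σ := σ) (B := B) hYoV
    rwa [double_orth hB V] at this
  have hVZ : V ≤ Y ⊓ QRep.orthFam σ M B Y := le_inf hVY hVO
  by_cases hZY : Y ⊓ QRep.orthFam σ M B Y = Y
  · have hiso : QRep.IsotropicFam σ M B Y :=
      le_trans hZY.symm.le inf_le_right
    have hle : rs θ M V Y ≤ 0 := hq Y hYsub hVY hYoV hiso hYneV
    exact absurd hle (not_le.mpr hYpos)
  · have hz0 : rs θ M (Y ⊓ QRep.orthFam σ M B Y) Y = 0 := rs_inf_orth_zero hθ hB Y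
    by_cases hZV : Y ⊓ QRep.orthFam σ M B Y = V
    · rw [hZV] at hz0
      exact absurd hz0 (ne_of_gt hYpos)
    · have hlt : rs θ M V Y < rs θ M V (Y ⊓ QRep.orthFam σ M B Y) :=
        rs_left_gt θ hVZ inf_le_left hZV (Ne.symm hZY) (by rw [hz0]; exact hYpos)
      have hZP : P (Y ⊓ QRep.orthFam σ M B Y) :=
        ⟨isSubRep_inf hYsub (orth_isSubRep hB hYsub), hVZ,
          le_trans inf_le_left hYoV, hZV, lt_trans hYpos hlt⟩
      exact absurd (hmax _ hZP) (not_le.mpr hlt)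

lemma orth_ss (hθ : QRep.SigmaCompatible σ θ) (hB : QRep.IsSelfDualForm σ D M B)
    {A C : M.SubFam} (hAC : A ≤ C) (h : QRep.SubquotSemistable θ M A C) :
    QRep.SubquotSemistable θ M (QRep.orthFam σ M B C) (QRep.orthFam σ M B A) := by
  intro Y hY h1 h2 hne
  by_cases hYA : Y = QRep.orthFam σ M B A
  · subst hYA; exact le_rfl
  have hAoY : A ≤ QRep.orthFam σ M B Y := by
    have := orth_antitone (σ := σ) (B := B) h2
    rwa [double_orth hB A] at this
  have hoYC : QRep.orthFam σ M B Y ≤ C := by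
    have := orth_antitone (σ := σ) (B := B) h1
    rwa [double_orth hB C] at this
  have hoYA : QRep.orthFam σ M B Y ≠ A := by
    intro hc
    apply hYA
    rw [← double_orth hB Y, hc]
  have hb : rs θ M A (QRep.orthFam σ M B Y) ≤ rs θ M A C :=
    h (QRep.orthFam σ M B Y) (orth_isSubRep hB hY) hAoY hoYC hoYA
  have hoYne : C ≠ QRep.orthFam σ M B Y := by
    intro hc
    apply hne
    rw [← double_orth hB Y, ← hc]
  have hsw : rs θ M A C ≤ rs θ M (QRep.orthFam σ M B Y) C :=
    rs_right_ge θ hAoY hoYC hoYne hb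
  have e1 : rs θ M (QRep.orthFam σ M B C) Y = - rs θ M (QRep.orthFam σ M B Y) C := by
    have := rs_orth hθ hB (QRep.orthFam σ M B Y) C
    rwa [double_orth hB Y] at this
  show rs θ M (QRep.orthFam σ M B C) Y
      ≤ rs θ M (QRep.orthFam σ M B C) (QRep.orthFam σ M B A)
  rw [e1, rs_orth hθ hB A C]
  exact neg_le_neg hsw

end Orth
end SHN
namespace SHN
section Main
open QRep Module
variable {Q : FinQuiver} {σ : QInv Q} {D : Duality Q σ} {θ : (Q.V → ℤ) →+ ℤ}
variable {M : QRep Q} {B : M.Bilin}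

lemma sigmaHN_exists (hθ : QRep.SigmaCompatible σ θ) (hB : QRep.IsSelfDualForm σ D M B) :
    ∃ r, ∃ U : Fin (r+1) → M.SubFam, QRep.IsSigmaHN σ θ M B r U := by
  classical
  obtain ⟨s, F, hF⟩ := hn_exists (θ := θ) (⊥ : M.SubFam) isSubRep_bot
  have hex : ∃ k, s ≤ k ∨ rs θ M (F k) (F (k+1)) ≤ 0 := ⟨s, Or.inl le_rfl⟩
  set r := Nat.find hex with hr
  have hrs : r ≤ s := Nat.find_min' hex (Or.inl le_rfl)
  have hpos : ∀ k, k < r → k < s ∧ 0 < rs θ M (F k) (F (k+1)) := by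
    intro k hk
    have h := Nat.find_min hex (show k < Nat.find hex from hr ▸ hk)
    push_neg at h
    obtain ⟨ha, hb⟩ := h
    exact ⟨by omega, hb⟩
  have hspec : s ≤ r ∨ rs θ M (F r) (F (r+1)) ≤ 0 := Nat.find_spec hex
  -- the dual chain
  have hG : HNChain θ M ⊥ s (fun j => QRep.orthFam σ M B (F (s - j))) := by
    constructor
    · intro j _; exact orth_isSubRep hB (hF.sub (s-j) (by omega))
    · show QRep.orthFam σ M B (F (s - 0)) = ⊥
      rw [show s - 0 = s from rfl, hF.top, orth_top hB]
    · show QRep.orthFam σ M B (F (s - s)) = ⊤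
      rw [show s - s = 0 by omega, hF.zero, orth_bot]
    · intro j hj
      refine orth_antitone ?_
      have h := hF.le (s-j-1) (by omega)
      rw [show s-j-1+1 = s-j by omega] at h
      rw [show s-(j+1) = s-j-1 by omega]
      exact h
    · intro j hj h
      have h2 : F (s - j) = F (s - (j+1)) := by
        have h3 := congrArg (QRep.orthFam σ M B) h
        rwa [double_orth hB, double_orth hB] at h3
      refine hF.ne (s-j-1) (by omega) ?_
      rw [show s-j-1+1 = s-j by omega]
      rw [show s-(j+1) = s-j-1 by omega] at h2
      exact h2.symm
    · intro j hj
      have hAC : F (s-j-1) ≤ F (s-j) := by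
        have h := hF.le (s-j-1) (by omega)
        rwa [show s-j-1+1 = s-j by omega] at h
      have hss := hF.ss (s-j-1) (by omega)
      rw [show s-j-1+1 = s-j by omega] at hss
      have := orth_ss hθ hB hAC hss
      rwa [show s-(j+1) = s-j-1 by omega]
    · intro j l hjl hls
      have hGs : ∀ j, j < s → rs θ M (QRep.orthFam σ M B (F (s-j)))
          (QRep.orthFam σ M B (F (s-(j+1)))) = - rs θ M (F (s-j-1)) (F (s-j)) := by
        intro j hj
        rw [show s - (j+1) = s-j-1 by omega]
        exact rs_orth hθ hB (F (s-j-1)) (F (s-j))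
      rw [hGs j (by omega), hGs l (by omega)]
      have := hF.dec (s-l-1) (s-j-1) (by omega) (by omega)
      have h2 : rs θ M (F (s-l-1)) (F (s-l-1+1)) = rs θ M (F (s-l-1)) (F (s-l)) := by
        rw [show s-l-1+1 = s-l by omega]
      have h3 : rs θ M (F (s-j-1)) (F (s-j-1+1)) = rs θ M (F (s-j-1)) (F (s-j)) := by
        rw [show s-j-1+1 = s-j by omega]
      rw [h2, h3] at this
      linarith
  obtain ⟨-, horth⟩ := hn_unique s ⊥ F s _ hF hG
  have horth' : ∀ k, k ≤ s → QRep.orthFam σ M B (F k) = F (s-k) := by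
    intro k hk
    have h := horth (s-k) (by omega)
    rw [show s-(s-k) = k by omega] at h
    exact h.symm
  have hsym : ∀ k, k < s →
      rs θ M (F k) (F (k+1)) = - rs θ M (F (s-k-1)) (F (s-k)) := by
    intro k hk
    rw [horth k (by omega), horth (k+1) (by omega), show s-(k+1) = s-k-1 by omega]
    exact rs_orth hθ hB (F (s-k-1)) (F (s-k))
  have hiso : ∀ k, k ≤ r → F k ≤ QRep.orthFam σ M B (F k) := by
    intro k hk
    rcases Nat.eq_zero_or_pos k with rfl | hk0
    · rw [hF.zero]; exact bot_le
    · have hk1 := hpos (k-1) (by omega)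
      have hs1 := hsym (k-1) hk1.1
      rw [show k-1+1 = k by omega, show s-(k-1)-1 = s-k by omega,
        show s-(k-1) = s-k+1 by omega] at hs1
      have hneg : rs θ M (F (s-k)) (F (s-k+1)) < 0 := by
        have := hk1.2
        rw [show k-1+1 = k by omega] at this
        linarith
      have hnr : ¬ (s - k < r) := by
        intro hc
        have := (hpos (s-k) hc).2
        linarith
      rw [horth' k (by omega)]
      exact hF.mono (by omega) (by omega)
  refine ⟨r, fun k => F k.val, ?_, ?_, ?_, ?_, ?_, ?_, ?_, ?_, ?_⟩
  · intro k; exact hF.sub k.val (by have := k.isLt; omega)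
  · show F (0 : Fin (r+1)).val = ⊥
    rw [Fin.val_zero, hF.zero]
  · intro k
    show F k.castSucc.val ≤ F k.succ.val
    rw [Fin.coe_castSucc, Fin.val_succ]
    exact hF.le k.val (by have := k.isLt; omega)
  · intro k
    show F k.castSucc.val ≠ F k.succ.val
    rw [Fin.coe_castSucc, Fin.val_succ]
    exact hF.ne k.val (by have := k.isLt; omega)
  · intro k
    show F k.val ≤ QRep.orthFam σ M B (F k.val)
    exact hiso k.val (by have := k.isLt; omega)
  · intro k
    show QRep.SubquotSemistable θ M (F k.castSucc.val) (F k.succ.val)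
    rw [Fin.coe_castSucc, Fin.val_succ]
    exact hF.ss k.val (by have := k.isLt; omega)
  · intro k l hkl
    show rs θ M (F l.castSucc.val) (F l.succ.val) < rs θ M (F k.castSucc.val) (F k.succ.val)
    rw [Fin.coe_castSucc, Fin.val_succ, Fin.coe_castSucc, Fin.val_succ]
    exact hF.dec k.val l.val hkl (by have := l.isLt; omega)
  · intro k
    show 0 < rs θ M (F k.castSucc.val) (F k.succ.val)
    rw [Fin.coe_castSucc, Fin.val_succ]
    exact (hpos k.val k.isLt).2
  · intro W hW h1' h2'' hisoW hne'
    have h1 : F r ≤ W := h1'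
    have h2 : W ≤ QRep.orthFam σ M B (F r) := h2''
    have hne : W ≠ F r := hne'
    have h2' : W ≤ F (s - r) := by rw [← horth' r hrs]; exact h2
    show rs θ M (F r) W ≤ 0
    by_cases hreq : r = s
    · exfalso
      rw [show s - r = 0 by omega, hF.zero] at h2'
      have hWbot : W = ⊥ := le_bot_iff.mp h2'
      have hFrbot : F r = ⊥ := le_bot_iff.mp (le_trans h1 h2')
      exact hne (hWbot.trans hFrbot.symm)
    · have hrlt : r < s := by omega
      have hSh := hF.shift (k := r) hrs
      have hWtop : W ≤ (fun l => F (r + l)) (s - r) := by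
        show W ≤ F (r + (s - r))
        rw [show r + (s - r) = s by omega, hF.top]
        exact le_top
      have hA := (hSh.lemmaA (by omega) (s - r) le_rfl W hW h1 hWtop hne).1
      have h0 : rs θ M (F (r + 0)) (F (r + 1)) = rs θ M (F r) (F (r+1)) := by norm_num
      rw [h0] at hA
      have hle0 : rs θ M (F r) (F (r+1)) ≤ 0 := by
        rcases hspec with h | h
        · omega
        · exact h
      exact le_trans hA hle0

end Main
end SHN
namespace SHN
section Ext
open QRep Module
variable {Q : FinQuiver} {σ : QInv Q} {D : Duality Q σ} {θ : (Q.V → ℤ) →+ ℤ}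
variable {M : QRep Q} {B : M.Bilin}

lemma extend_chain (hθ : QRep.SigmaCompatible σ θ) (hB : QRep.IsSelfDualForm σ D M B)
    {r : ℕ} {U : Fin (r+1) → M.SubFam} (hU : QRep.IsSigmaHN σ θ M B r U) :
    ∃ s F, HNChain θ M ⊥ s F ∧ r ≤ s ∧
      (∀ k (hk : k ≤ r), F k = U ⟨k, Nat.lt_succ_of_le hk⟩) ∧
      (∀ k, k < r → 0 < rs θ M (F k) (F (k+1))) ∧
      (∀ k, r ≤ k → k < s → rs θ M (F k) (F (k+1)) ≤ 0) := by
  classical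
  obtain ⟨hsub, h0, hle, hne, hiso, hss, hdec, hpos, hq⟩ := hU
  set u : ℕ → M.SubFam :=
    fun n => if h : n ≤ r then U ⟨n, Nat.lt_succ_of_le h⟩ else U (Fin.last r) with hudef
  have hu_eq : ∀ k (hk : k ≤ r), u k = U ⟨k, Nat.lt_succ_of_le hk⟩ := fun k hk => dif_pos hk
  have husub : ∀ n, M.IsSubRep (u n) := by
    intro n
    by_cases h : n ≤ r
    · rw [hu_eq n h]; exact hsub _
    · rw [hudef]; simp only [dif_neg h]; exact hsub _
  have hu0 : u 0 = ⊥ := by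
    rw [hu_eq 0 (by omega)]
    rw [show (⟨0, Nat.lt_succ_of_le (by omega)⟩ : Fin (r+1)) = 0 from rfl]
    exact h0
  have hur : u r = U (Fin.last r) := by
    rw [hu_eq r le_rfl]; rfl
  have hfin1 : ∀ (n : ℕ) (hn : n < r),
      U (Fin.castSucc ⟨n, hn⟩) = u n := by
    intro n hn
    rw [hu_eq n (by omega)]
    exact congrArg U (Fin.ext (by simp))
  have hfin2 : ∀ (n : ℕ) (hn : n < r),
      U (Fin.succ ⟨n, hn⟩) = u (n+1) := by
    intro n hn
    rw [hu_eq (n+1) (by omega)]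
    exact congrArg U (Fin.ext (by simp))
  have hule : ∀ n, n < r → u n ≤ u (n+1) := by
    intro n hn
    rw [← hfin1 n hn, ← hfin2 n hn]; exact hle ⟨n, hn⟩
  have hune : ∀ n, n < r → u n ≠ u (n+1) := by
    intro n hn
    rw [← hfin1 n hn, ← hfin2 n hn]; exact hne ⟨n, hn⟩
  have huss : ∀ n, n < r → QRep.SubquotSemistable θ M (u n) (u (n+1)) := by
    intro n hn
    rw [← hfin1 n hn, ← hfin2 n hn]; exact hss ⟨n, hn⟩
  set ρ : ℕ → ℚ := fun n => rs θ M (u n) (u (n+1)) with hρdef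
  have hρpos : ∀ n, n < r → 0 < ρ n := by
    intro n hn
    have := hpos ⟨n, hn⟩
    have e : QRep.stepSlope θ r U ⟨n, hn⟩ = ρ n := by
      show rs θ M (U (Fin.castSucc ⟨n, hn⟩)) (U (Fin.succ ⟨n, hn⟩)) = ρ n
      rw [hfin1 n hn, hfin2 n hn]
    rwa [e] at this
  have hρdec : ∀ n m, n < m → m < r → ρ m < ρ n := by
    intro n m hnm hmr
    have := hdec ⟨n, by omega⟩ ⟨m, hmr⟩ (by exact hnm)
    have e1 : QRep.stepSlope θ r U ⟨n, by omega⟩ = ρ n := by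
      show rs θ M (U (Fin.castSucc ⟨n, by omega⟩)) (U (Fin.succ ⟨n, by omega⟩)) = ρ n
      rw [hfin1 n (by omega), hfin2 n (by omega)]
    have e2 : QRep.stepSlope θ r U ⟨m, hmr⟩ = ρ m := by
      show rs θ M (U (Fin.castSucc ⟨m, hmr⟩)) (U (Fin.succ ⟨m, hmr⟩)) = ρ m
      rw [hfin1 m hmr, hfin2 m hmr]
    rwa [e1, e2] at this
  have hisor : u r ≤ QRep.orthFam σ M B (u r) := by
    rw [hur]; exact hiso (Fin.last r)
  have hq' : QRep.SigmaSemistableQuot σ θ M B (u r) := by rw [hur]; exact hq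
  by_cases hdeg : u r = QRep.orthFam σ M B (u r)
  · -- degenerate middle: s = 2r
    set s := 2 * r with hs
    set F : ℕ → M.SubFam :=
      fun k => if k ≤ r then u k else QRep.orthFam σ M B (u (s - k)) with hF
    have hFle : ∀ k (hk : k ≤ r), F k = u k := fun k hk => if_pos hk
    have hFge : ∀ k, r ≤ k → k ≤ s → F k = QRep.orthFam σ M B (u (s - k)) := by
      intro k hk1 hk2
      by_cases h : k ≤ r
      · have hkr : k = r := le_antisymm h hk1
        subst hkr
        rw [hFle k le_rfl, show s - k = k by omega]
        exact hdeg
      · exact if_neg h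
    have hsl1 : ∀ k, k < r → rs θ M (F k) (F (k+1)) = ρ k := by
      intro k hk
      rw [hFle k (by omega), hFle (k+1) (by omega)]
    have hsl2 : ∀ k, r ≤ k → k < s → rs θ M (F k) (F (k+1)) = - ρ (s - k - 1) := by
      intro k hk1 hk2
      rw [hFge k hk1 (by omega), hFge (k+1) (by omega) (by omega),
        show s - (k+1) = s - k - 1 by omega]
      have hro := rs_orth hθ hB (u (s-k-1)) (u (s-k))
      rw [hro]
      have e : ρ (s-k-1) = rs θ M (u (s-k-1)) (u (s-k)) := by
        show rs θ M (u (s-k-1)) (u (s-k-1+1)) = _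
        rw [show s - k - 1 + 1 = s - k by omega]
      rw [e]
    refine ⟨s, F, ⟨?_, ?_, ?_, ?_, ?_, ?_, ?_⟩, by omega, ?_, ?_, ?_⟩
    · intro k hk
      by_cases h : k ≤ r
      · rw [hFle k h]; exact husub k
      · rw [hFge k (by omega) hk]; exact orth_isSubRep hB (husub _)
    · rw [hFle 0 (by omega), hu0]
    · rw [hFge s (by omega) le_rfl, show s - s = 0 by omega, hu0, orth_bot]
    · intro k hk
      by_cases h : k < r
      · rw [hFle k (by omega), hFle (k+1) (by omega)]; exact hule k h
      · rw [hFge k (by omega) (by omega), hFge (k+1) (by omega) (by omega),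
          show s - (k+1) = s - k - 1 by omega]
        refine orth_antitone ?_
        have := hule (s-k-1) (by omega)
        rwa [show s - k - 1 + 1 = s - k by omega] at this
    · intro k hk
      by_cases h : k < r
      · rw [hFle k (by omega), hFle (k+1) (by omega)]; exact hune k h
      · rw [hFge k (by omega) (by omega), hFge (k+1) (by omega) (by omega),
          show s - (k+1) = s - k - 1 by omega]
        intro hc
        have h2 : u (s-k) = u (s-k-1) := by
          have h3 := congrArg (QRep.orthFam σ M B) hc
          rwa [double_orth hB, double_orth hB] at h3
        have := hune (s-k-1) (by omega)
        rw [show s - k - 1 + 1 = s - k by omega] at this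
        exact this h2.symm
    · intro k hk
      by_cases h : k < r
      · rw [hFle k (by omega), hFle (k+1) (by omega)]; exact huss k h
      · rw [hFge k (by omega) (by omega), hFge (k+1) (by omega) (by omega),
          show s - (k+1) = s - k - 1 by omega]
        have hAC : u (s-k-1) ≤ u (s-k) := by
          have := hule (s-k-1) (by omega)
          rwa [show s - k - 1 + 1 = s - k by omega] at this
        have hssk := huss (s-k-1) (by omega)
        rw [show s - k - 1 + 1 = s - k by omega] at hssk
        exact orth_ss hθ hB hAC hssk
    · intro k l hkl hls
      by_cases hl : l < r
      · rw [hsl1 k (by omega), hsl1 l hl]; exact hρdec k l hkl hl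
      · rw [hsl2 l (by omega) hls]
        by_cases hk : k < r
        · rw [hsl1 k hk]
          have := hρpos k hk
          have := hρpos (s-l-1) (by omega)
          linarith
        · rw [hsl2 k (by omega) (by omega)]
          have := hρdec (s-l-1) (s-k-1) (by omega) (by omega)
          linarith
    · intro k hk; rw [hFle k hk]; exact hu_eq k hk
    · intro k hk; rw [hsl1 k hk]; exact hρpos k hk
    · intro k hk1 hk2
      rw [hsl2 k hk1 hk2]
      have := hρpos (s-k-1) (by omega)
      linarith
  · -- nondegenerate middle: s = 2r+1
    set s := 2 * r + 1 with hs
    set F : ℕ → M.SubFam :=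
      fun k => if k ≤ r then u k else QRep.orthFam σ M B (u (s - k)) with hF
    have hFle : ∀ k (hk : k ≤ r), F k = u k := fun k hk => if_pos hk
    have hFge : ∀ k, r + 1 ≤ k → F k = QRep.orthFam σ M B (u (s - k)) :=
      fun k hk => if_neg (by omega)
    have hsl1 : ∀ k, k < r → rs θ M (F k) (F (k+1)) = ρ k := by
      intro k hk
      rw [hFle k (by omega), hFle (k+1) (by omega)]
    have hslmid : rs θ M (F r) (F (r+1)) = 0 := by
      rw [hFle r le_rfl, hFge (r+1) le_rfl, show s - (r+1) = r by omega]
      exact rs_orth_self hθ hB (u r)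
    have hsl2 : ∀ k, r + 1 ≤ k → k < s → rs θ M (F k) (F (k+1)) = - ρ (s - k - 1) := by
      intro k hk1 hk2
      rw [hFge k hk1, hFge (k+1) (by omega), show s - (k+1) = s - k - 1 by omega]
      have hro := rs_orth hθ hB (u (s-k-1)) (u (s-k))
      rw [hro]
      have e : ρ (s-k-1) = rs θ M (u (s-k-1)) (u (s-k)) := by
        show rs θ M (u (s-k-1)) (u (s-k-1+1)) = _
        rw [show s - k - 1 + 1 = s - k by omega]
      rw [e]
    refine ⟨s, F, ⟨?_, ?_, ?_, ?_, ?_, ?_, ?_⟩, by omega, ?_, ?_, ?_⟩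
    · intro k hk
      by_cases h : k ≤ r
      · rw [hFle k h]; exact husub k
      · rw [hFge k (by omega)]; exact orth_isSubRep hB (husub _)
    · rw [hFle 0 (by omega), hu0]
    · rw [hFge s (by omega), show s - s = 0 by omega, hu0, orth_bot]
    · intro k hk
      by_cases h : k < r
      · rw [hFle k (by omega), hFle (k+1) (by omega)]; exact hule k h
      · by_cases h2 : k = r
        · subst h2
          rw [hFle k le_rfl, hFge (k+1) le_rfl, show s - (k+1) = k by omega]
          exact hisor
        · rw [hFge k (by omega), hFge (k+1) (by omega),
            show s - (k+1) = s - k - 1 by omega]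
          refine orth_antitone ?_
          have := hule (s-k-1) (by omega)
          rwa [show s - k - 1 + 1 = s - k by omega] at this
    · intro k hk
      by_cases h : k < r
      · rw [hFle k (by omega), hFle (k+1) (by omega)]; exact hune k h
      · by_cases h2 : k = r
        · subst h2
          rw [hFle k le_rfl, hFge (k+1) le_rfl, show s - (k+1) = k by omega]
          exact hdeg
        · rw [hFge k (by omega), hFge (k+1) (by omega),
            show s - (k+1) = s - k - 1 by omega]
          intro hc
          have h3 : u (s-k) = u (s-k-1) := by
            have h4 := congrArg (QRep.orthFam σ M B) hc
            rwa [double_orth hB, double_orth hB] at h4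
          have := hune (s-k-1) (by omega)
          rw [show s - k - 1 + 1 = s - k by omega] at this
          exact this h3.symm
    · intro k hk
      by_cases h : k < r
      · rw [hFle k (by omega), hFle (k+1) (by omega)]; exact huss k h
      · by_cases h2 : k = r
        · subst h2
          rw [hFle k le_rfl, hFge (k+1) le_rfl, show s - (k+1) = k by omega]
          intro Y hY hY1 hY2 hYne
          have hb := middle_ss hθ hB hq' Y hY hY1 hY2 hYne
          have h0' : rs θ M (u k) (QRep.orthFam σ M B (u k)) = 0 := rs_orth_self hθ hB (u k)
          show rs θ M (u k) Y ≤ rs θ M (u k) (QRep.orthFam σ M B (u k))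
          rw [h0']
          exact hb
        · rw [hFge k (by omega), hFge (k+1) (by omega),
            show s - (k+1) = s - k - 1 by omega]
          have hAC : u (s-k-1) ≤ u (s-k) := by
            have := hule (s-k-1) (by omega)
            rwa [show s - k - 1 + 1 = s - k by omega] at this
          have hssk := huss (s-k-1) (by omega)
          rw [show s - k - 1 + 1 = s - k by omega] at hssk
          exact orth_ss hθ hB hAC hssk
    · intro k l hkl hls
      rcases lt_trichotomy l r with hl | hl | hl
      · rw [hsl1 k (by omega), hsl1 l hl]; exact hρdec k l hkl hl
      · subst hl
        rw [hslmid, hsl1 k (by omega)]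
        exact hρpos k (by omega)
      · rw [hsl2 l (by omega) hls]
        rcases lt_trichotomy k r with hk | hk | hk
        · rw [hsl1 k hk]
          have := hρpos k hk
          have := hρpos (s-l-1) (by omega)
          linarith
        · subst hk
          rw [hslmid]
          have := hρpos (s-l-1) (by omega)
          linarith
        · rw [hsl2 k (by omega) (by omega)]
          have := hρdec (s-l-1) (s-k-1) (by omega) (by omega)
          linarith
    · intro k hk; rw [hFle k hk]; exact hu_eq k hk
    · intro k hk; rw [hsl1 k hk]; exact hρpos k hk
    · intro k hk1 hk2
      rcases eq_or_lt_of_le hk1 with rfl | hk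
      · rw [hslmid]
      · rw [hsl2 k (by omega) hk2]
        have := hρpos (s-k-1) (by omega)
        linarith

end Ext
end SHN
namespace SHN
section Uniq
open QRep Module
variable {Q : FinQuiver} {σ : QInv Q} {D : Duality Q σ} {θ : (Q.V → ℤ) →+ ℤ}
variable {M : QRep Q} {B : M.Bilin}

lemma sigmaHN_unique (hθ : QRep.SigmaCompatible σ θ) (hB : QRep.IsSelfDualForm σ D M B)
    {r : ℕ} {U : Fin (r+1) → M.SubFam} (hU : QRep.IsSigmaHN σ θ M B r U)
    {r' : ℕ} {U' : Fin (r'+1) → M.SubFam} (hU' : QRep.IsSigmaHN σ θ M B r' U') :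
    (⟨r, U⟩ : Σ n : ℕ, (Fin (n+1) → M.SubFam)) = ⟨r', U'⟩ := by
  obtain ⟨s, F, hF, hrs, hFU, hFpos, hFneg⟩ := extend_chain hθ hB hU
  obtain ⟨s', F', hF', hrs', hFU', hFpos', hFneg'⟩ := extend_chain hθ hB hU'
  obtain ⟨hseq, heq⟩ := hn_unique s ⊥ F s' F' hF hF'
  subst hseq
  have hrr : r = r' := by
    by_contra hne
    rcases Nat.lt_or_ge r r' with h | h
    · have h1 : 0 < rs θ M (F' r) (F' (r+1)) := hFpos' r h
      have h2 : rs θ M (F r) (F (r+1)) ≤ 0 := hFneg r le_rfl (by omega)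
      rw [heq r (by omega), heq (r+1) (by omega)] at h2
      linarith
    · have hlt : r' < r := lt_of_le_of_ne h (Ne.symm hne)
      have h1 : 0 < rs θ M (F r') (F (r'+1)) := hFpos r' hlt
      have h2 : rs θ M (F' r') (F' (r'+1)) ≤ 0 := hFneg' r' le_rfl (by omega)
      rw [← heq r' (by omega), ← heq (r'+1) (by omega)] at h2
      linarith
  subst hrr
  have hUU : U = U' := by
    funext k
    have hk : k.val ≤ r := Nat.lt_succ_iff.mp k.isLt
    have e1 := hFU k.val hk
    have e2 := hFU' k.val hk
    have e3 := heq k.val (by omega)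
    have e5 : U ⟨k.val, Nat.lt_succ_of_le hk⟩ = U' ⟨k.val, Nat.lt_succ_of_le hk⟩ := by
      rw [← e1, ← e2]; exact e3
    have e4 : (⟨k.val, Nat.lt_succ_of_le hk⟩ : Fin (r+1)) = k := Fin.ext rfl
    rwa [e4] at e5
  rw [hUU]

end Uniq
end SHN
/-- Every self-dual representation `M` of a quiver with involution,
duality structure and σ-compatible stability admits a unique σ-Harder–Narasimhan
filtration `0 = U_0 ⊂ U_1 ⊂ ⋯ ⊂ U_r ⊂ M` (uniqueness includes uniqueness of the
length `r`). -/
theorem existsUnique_sigmaHN (Q : FinQuiver) (σ : QInv Q) (D : Duality Q σ)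
    (θ : (Q.V → ℤ) →+ ℤ) (hθ : QRep.SigmaCompatible σ θ)
    (M : QRep Q) (B : M.Bilin) (hB : QRep.IsSelfDualForm σ D M B) :
    ∃! F : Σ r : ℕ, (Fin (r+1) → M.SubFam),
      QRep.IsSigmaHN σ θ M B F.1 F.2 := by
  obtain ⟨r, U, hU⟩ := SHN.sigmaHN_exists hθ hB
  refine ⟨⟨r, U⟩, hU, ?_⟩
  rintro ⟨r', U'⟩ hU'
  exact SHN.sigmaHN_unique hθ hB hU' hU
end

section
/- Let Q be a finite quiver with involution σ and duality structure (s, τ), let θ be a σ-compatible stability, and let M be a self-dual representation of Q with σ-Harder–Narasimhan filtration 0 = U_0 ⊂ U_1 ⊂ ⋯ ⊂ U_r ⊂ M. Then the filtration 0 = U_0 ⊂ U_1 ⊂ ⋯ ⊂ U_r ⊆ U_r^⊥ ⊂ U_{r−1}^⊥ ⊂ ⋯ ⊂ U_0^⊥ = M, with the repeated term deleted when U_r = U_r^⊥ (i.e. when M//U_r = 0), is the Harder–Narasimhan filtration of M regarded as an ordinary representation; in particular each subquotient U_{k−1}^⊥/U_k^⊥ (k = 1,…,r) is semistable of slope −μ(U_k/U_{k−1}),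 and U_r^⊥/U_r is semistable of slope 0 if nonzero. -/
open scoped BigOperators

namespace SHN

open QRep Module

variable {Q : FinQuiver} (σ : QInv Q) (D : Duality Q σ) (M : QRep Q) (B : M.Bilin)

lemma castEquiv_rfl {i : Q.V} (x : M.carrier i) : M.castEquiv rfl x = x := rfl

lemma cast_mem (V : M.SubFam) {i j : Q.V} (h : i = j) {x : M.carrier i}
    (hx : x ∈ V i) : M.castEquiv h x ∈ V j := by subst h; exact hx

lemma B_single_cast_right {i j : Q.V} (h : i = j) (w : ∀ k, M.carrier k) (z : M.carrier i) :
    B w (Pi.single j (M.castEquiv h z)) = B w (Pi.single i z) := by subst h; rfl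

lemma mem_orth {U : M.SubFam} {i : Q.V} {m : M.carrier i} :
    m ∈ orthFam σ M B U i ↔
      ∀ y ∈ U (σ.onV i), B (Pi.single i m) (Pi.single (σ.onV i) y) = 0 := by
  simp only [orthFam, Submodule.mem_iInf, LinearMap.mem_ker, LinearMap.flip_apply,
    LinearMap.comp_apply, LinearMap.coe_single]
  constructor
  · intro h y hy; exact h ⟨y, hy⟩
  · intro h y; exact h y y.2

end SHN
namespace SHN2
open QRep Module SHN

variable {Q : FinQuiver} (σ : QInv Q) (D : Duality Q σ) (M : QRep Q) (B : M.Bilin)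

lemma B_single_left (hOB : sdOrthBlocks σ M B) (i : Q.V) (m : M.carrier i)
    (y : ∀ j, M.carrier j) :
    B (Pi.single i m) y = B (Pi.single i m) (Pi.single (σ.onV i) (y (σ.onV i))) := by
  conv_lhs => rw [← Finset.univ_sum_single y]
  rw [map_sum, Finset.sum_eq_single (σ.onV i)]
  · intro j _ hj; exact hOB i j hj m (y j)
  · simp

/-- The pairing `M_i → (M_{σ i})^*`. -/
noncomputable def phi (i : Q.V) : M.carrier i →ₗ[ℂ] Module.Dual ℂ (M.carrier (σ.onV i)) :=
  (B.comp (LinearMap.single ℂ M.carrier i)).compl₂ (LinearMap.single ℂ M.carrier (σ.onV i))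

lemma phi_apply (i : Q.V) (m : M.carrier i) (y : M.carrier (σ.onV i)) :
    phi σ M B i m y = B (Pi.single i m) (Pi.single (σ.onV i) y) := rfl

lemma phi_injective (hB : IsSelfDualForm σ D M B) (i : Q.V) :
    Function.Injective (phi σ M B i) := by
  rw [injective_iff_map_eq_zero]
  intro m hm
  have h0 : Pi.single i m = 0 := by
    apply hB.1
    intro y
    rw [B_single_left σ M B hB.2.1 i m y]
    exact congrFun (congrArg DFunLike.coe hm) (y (σ.onV i))
  have := congrFun h0 i
  simpa using this

lemma finrank_sigma (hB : IsSelfDualForm σ D M B) (i : Q.V) :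
    finrank ℂ (M.carrier (σ.onV i)) = finrank ℂ (M.carrier i) := by
  have h1 : ∀ j, finrank ℂ (M.carrier j) ≤ finrank ℂ (M.carrier (σ.onV j)) := by
    intro j
    have := LinearMap.finrank_le_finrank_of_injective (phi_injective σ D M B hB j)
    rwa [Subspace.dual_finrank_eq] at this
  have h2 := h1 (σ.onV i)
  rw [σ.invV i] at h2
  exact le_antisymm h2 (h1 i)

noncomputable def phiEquiv (hB : IsSelfDualForm σ D M B) (i : Q.V) :
    M.carrier i ≃ₗ[ℂ] Module.Dual ℂ (M.carrier (σ.onV i)) :=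
  LinearMap.linearEquivOfInjective (phi σ M B i) (phi_injective σ D M B hB i)
    (by rw [Subspace.dual_finrank_eq, finrank_sigma σ D M B hB])

lemma orth_eq_comap (hB : IsSelfDualForm σ D M B) (U : M.SubFam) (i : Q.V) :
    orthFam σ M B U i
      = (Submodule.comap (phiEquiv σ D M B hB i : M.carrier i →ₗ[ℂ] _)
          (U (σ.onV i)).dualAnnihilator) := by
  ext m
  rw [mem_orth]
  simp only [Submodule.mem_comap, Submodule.mem_dualAnnihilator, LinearEquiv.coe_coe]
  have key : ∀ y, ((phiEquiv σ D M B hB i) m) y = B (Pi.single i m) (Pi.single (σ.onV i) y) := by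
    intro y
    have : (phiEquiv σ D M B hB i) m = phi σ M B i m := by
      simp [phiEquiv, LinearMap.linearEquivOfInjective_apply]
    rw [this]; rfl
  constructor
  · intro h y hy; rw [key]; exact h y hy
  · intro h y hy; rw [← key]; exact h y hy

lemma finrank_orth (hB : IsSelfDualForm σ D M B) (U : M.SubFam) (i : Q.V) :
    (finrank ℂ (orthFam σ M B U i) : ℤ)
      = finrank ℂ (M.carrier i) - finrank ℂ (U (σ.onV i)) := by
  rw [orth_eq_comap σ D M B hB U i]
  rw [Submodule.comap_equiv_eq_map_symm]
  rw [LinearEquiv.finrank_map_eq]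
  have h1 : finrank ℂ (U (σ.onV i)).dualAnnihilator
      = finrank ℂ (M.carrier (σ.onV i)) - finrank ℂ (U (σ.onV i)) := by
    have e := (Submodule.dualQuotEquivDualAnnihilator (U (σ.onV i))).finrank_eq
    rw [Subspace.dual_finrank_eq] at e
    rw [← e]
    have := Submodule.finrank_quotient_add_finrank (U (σ.onV i))
    omega
  rw [h1, finrank_sigma σ D M B hB i]
  have hle := Submodule.finrank_le (U (σ.onV i))
  rw [finrank_sigma σ D M B hB i] at hle
  omega

end SHN2
namespace SHN3
open QRep Module SHN SHN2

variable {Q : FinQuiver} (σ : QInv Q) (D : Duality Q σ) (M : QRep Q) (B : M.Bilin)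

lemma orth_antitone {U V : M.SubFam} (h : U ≤ V) :
    orthFam σ M B V ≤ orthFam σ M B U := by
  intro i m hm
  rw [mem_orth] at hm ⊢
  intro y hy
  exact hm y (h _ hy)

lemma orth_bot : orthFam σ M B (⊥ : M.SubFam) = ⊤ := by
  funext i
  show orthFam σ M B ⊥ i = ⊤
  rw [eq_top_iff]
  intro m _
  rw [mem_orth]
  intro y hy
  have : y = 0 := hy
  simp [this]

lemma le_biorth (hB : IsSelfDualForm σ D M B) (V : M.SubFam) :
    V ≤ orthFam σ M B (orthFam σ M B V) := by
  intro i x hx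
  rw [mem_orth]
  intro y hy
  rw [mem_orth] at hy
  have hx' : M.castEquiv (σ.invV i).symm x ∈ V (σ.onV (σ.onV i)) :=
    cast_mem M V (σ.invV i).symm hx
  have h0 := hy _ hx'
  rw [B_single_cast_right M B (σ.invV i).symm] at h0
  rw [hB.2.2.1 i x y, h0, mul_zero]

lemma biorth (hB : IsSelfDualForm σ D M B) (V : M.SubFam) :
    orthFam σ M B (orthFam σ M B V) = V := by
  funext i
  refine (Submodule.eq_of_le_of_finrank_le (le_biorth σ D M B hB V i) ?_).symm
  have h1 := finrank_orth σ D M B hB (orthFam σ M B V) i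
  have h2 := finrank_orth σ D M B hB V (σ.onV i)
  have h3 : finrank ℂ (V (σ.onV (σ.onV i))) = finrank ℂ (V i) := by rw [σ.invV i]
  have h4 := finrank_sigma σ D M B hB i
  omega

lemma orth_inj (hB : IsSelfDualForm σ D M B) {V W : M.SubFam}
    (h : orthFam σ M B V = orthFam σ M B W) : V = W := by
  rw [← biorth σ D M B hB V, ← biorth σ D M B hB W, h]

lemma orth_isSubRep (hB : IsSelfDualForm σ D M B) (V : M.SubFam) (hV : M.IsSubRep V) :
    M.IsSubRep (orthFam σ M B V) := by
  intro a x hx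
  rw [mem_orth] at hx ⊢
  intro y hy
  rw [hB.2.2.2 a x y]
  have h1 : M.castEquiv (σ.src_onA a).symm y ∈ V (Q.src (σ.onA a)) :=
    cast_mem M V (σ.src_onA a).symm hy
  have h2 : M.map (σ.onA a) (M.castEquiv (σ.src_onA a).symm y) ∈ V (Q.tgt (σ.onA a)) :=
    hV (σ.onA a) _ h1
  have h3 : M.castEquiv (σ.tgt_onA a) (M.map (σ.onA a) (M.castEquiv (σ.src_onA a).symm y))
      ∈ V (σ.onV (Q.src a)) := cast_mem M V (σ.tgt_onA a) h2
  have h4 := hx _ h3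
  rw [B_single_cast_right M B (σ.tgt_onA a)] at h4
  rw [h4, mul_zero]

lemma orth_sup (hB : IsSelfDualForm σ D M B) (V W : M.SubFam) :
    orthFam σ M B (V ⊔ W) = orthFam σ M B V ⊓ orthFam σ M B W := by
  funext i
  rw [Pi.inf_apply]
  ext m
  rw [Submodule.mem_inf, mem_orth, mem_orth, mem_orth]
  constructor
  · intro h
    constructor
    · intro y hy; exact h y (le_sup_left (a := V) (b := W) _ hy)
    · intro y hy; exact h y (le_sup_right (a := V) (b := W) _ hy)
  · rintro ⟨h1, h2⟩ y hy
    have hy' : y ∈ V (σ.onV i) ⊔ W (σ.onV i) := hy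
    obtain ⟨u, hu, v, hv, rfl⟩ := Submodule.mem_sup.1 hy'
    rw [Pi.single_add, map_add, h1 u hu, h2 v hv, add_zero]

end SHN3
namespace SHN4
open QRep Module SHN SHN2 SHN3

variable {Q : FinQuiver} (σ : QInv Q) (D : Duality Q σ) (M : QRep Q) (B : M.Bilin)
variable (θ : (Q.V → ℤ) →+ ℤ)

/-- σ as a permutation of vertices. -/
def σperm : Equiv.Perm Q.V := Function.Involutive.toPerm σ.onV σ.invV

lemma sum_comp_sigma (d : Q.V → ℤ) : ∑ i, d (σ.onV i) = ∑ i, d i :=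
  Equiv.sum_comp (σperm σ) d

lemma slope_comp_sigma (hθ : SigmaCompatible σ θ) (d : Q.V → ℤ) :
    slope θ (fun i => d (σ.onV i)) = - slope θ d := by
  unfold QRep.slope
  rw [hθ d, sum_comp_sigma]
  push_cast
  ring

lemma theta_M_eq_zero (hB : IsSelfDualForm σ D M B) (hθ : SigmaCompatible σ θ) :
    θ M.dimVecZ = 0 := by
  have h : (fun i => M.dimVecZ (σ.onV i)) = M.dimVecZ := by
    funext i
    simp only [dimVecZ]
    exact_mod_cast finrank_sigma σ D M B hB i
  have := hθ M.dimVecZ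
  rw [h] at this
  omega

lemma dimZ_orth (hB : IsSelfDualForm σ D M B) (V : M.SubFam) :
    dimZ (orthFam σ M B V) = M.dimVecZ - (fun i => dimZ V (σ.onV i)) := by
  funext i
  simp only [dimZ, dimVecZ, Pi.sub_apply]
  exact finrank_orth σ D M B hB V i

lemma theta_orth (hB : IsSelfDualForm σ D M B) (hθ : SigmaCompatible σ θ) (V : M.SubFam) :
    θ (dimZ (orthFam σ M B V)) = θ (dimZ V) := by
  rw [dimZ_orth σ D M B hB V, map_sub, theta_M_eq_zero σ D M B θ hB hθ, hθ (dimZ V)]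
  ring

/-- The key index-flip identity: for families `Y ≤ orth Us`,
`dimZ Y - dimZ (orth Us) = (dimZ Us - dimZ (orth Y)) ∘ σ`. -/
lemma diff_eq_comp_sigma (hB : IsSelfDualForm σ D M B) (Y Us : M.SubFam) :
    dimZ Y - dimZ (orthFam σ M B Us)
      = fun i => (dimZ Us - dimZ (orthFam σ M B Y)) (σ.onV i) := by
  funext i
  simp only [Pi.sub_apply, dimZ]
  have h1 := finrank_orth σ D M B hB Us i
  have h2 := finrank_orth σ D M B hB Y (σ.onV i)
  have h3 : finrank ℂ (Y (σ.onV (σ.onV i))) = finrank ℂ (Y i) := by rw [σ.invV i]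
  have h4 := finrank_sigma σ D M B hB i
  omega

lemma slope_diff_orth (hB : IsSelfDualForm σ D M B) (hθ : SigmaCompatible σ θ)
    (Y Us : M.SubFam) :
    slope θ (dimZ Y - dimZ (orthFam σ M B Us))
      = - slope θ (dimZ Us - dimZ (orthFam σ M B Y)) := by
  rw [diff_eq_comp_sigma σ D M B hB Y Us, slope_comp_sigma σ θ hθ]

lemma sum_diff_pos {V Y : M.SubFam} (h : V ≤ Y) (hne : Y ≠ V) :
    0 < ∑ i, (dimZ Y - dimZ V) i := by
  have hterm : ∀ i, 0 ≤ (dimZ Y - dimZ V) i := by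
    intro i
    simp only [Pi.sub_apply, dimZ, sub_nonneg]
    exact_mod_cast Submodule.finrank_mono (h i)
  rcases (Finset.sum_nonneg (fun i _ => hterm i)).lt_or_eq with hlt | heq
  · exact hlt
  · exfalso
    apply hne
    funext i
    have hz := (Finset.sum_eq_zero_iff_of_nonneg (fun i _ => hterm i)).1 heq.symm i
      (Finset.mem_univ i)
    simp only [Pi.sub_apply, dimZ, sub_eq_zero] at hz
    exact (Submodule.eq_of_le_of_finrank_le (h i) (by exact_mod_cast hz.le)).symm

lemma seesaw {p q m n : ℤ} (hm : (0:ℚ) < m) (hn : (0:ℚ) < n)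
    (h : (p:ℚ)/m ≤ ((p:ℚ)+q)/(m+n)) : ((p:ℚ)+q)/(m+n) ≤ (q:ℚ)/n := by
  rw [div_le_div_iff₀ hm (by linarith)] at h
  rw [div_le_div_iff₀ (by linarith) hn]
  nlinarith

lemma slope_zero_of_theta_zero (d : Q.V → ℤ) (h : θ d = 0) : slope θ d = 0 := by
  unfold QRep.slope
  rw [h]
  simp

end SHN4
namespace SHN5
open QRep Module SHN SHN2 SHN3 SHN4

variable {Q : FinQuiver} (σ : QInv Q) (D : Duality Q σ) (M : QRep Q) (B : M.Bilin)
variable (θ : (Q.V → ℤ) →+ ℤ)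

lemma slope_def (d : Q.V → ℤ) :
    QRep.slope θ d = (θ d : ℚ) / ((∑ i, d i : ℤ) : ℚ) := rfl

lemma theta_le_of_slope_nonpos {d : Q.V → ℤ} (hpos : 0 < ∑ i, d i)
    (h : QRep.slope θ d ≤ 0) : θ d ≤ 0 := by
  rw [slope_def] at h
  have hn : (0:ℚ) < ((∑ i, d i : ℤ) : ℚ) := by exact_mod_cast hpos
  have := (div_nonpos_iff.1 h)
  rcases this with ⟨h1, h2⟩ | ⟨h1, h2⟩
  · linarith
  · exact_mod_cast h1
  
lemma slope_nonpos_of_theta_nonpos {d : Q.V → ℤ} (hpos : 0 < ∑ i, d i)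
    (h : θ d ≤ 0) : QRep.slope θ d ≤ 0 := by
  rw [slope_def]
  apply div_nonpos_of_nonpos_of_nonneg
  · exact_mod_cast h
  · have : (0:ℚ) < ((∑ i, d i : ℤ) : ℚ) := by exact_mod_cast hpos
    linarith

lemma slope_orth_diff (hB : IsSelfDualForm σ D M B) (hθ : SigmaCompatible σ θ)
    (Uc Us : M.SubFam) :
    QRep.slope θ (dimZ (orthFam σ M B Uc) - dimZ (orthFam σ M B Us))
      = - QRep.slope θ (dimZ Us - dimZ Uc) := by
  have h := slope_diff_orth σ D M B θ hB hθ (orthFam σ M B Uc) Us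
  rwa [biorth σ D M B hB Uc] at h

/-- Middle steps: semistability of `orth Uc / orth Us`. -/
lemma middle_semistable (hB : IsSelfDualForm σ D M B) (hθ : SigmaCompatible σ θ)
    (Uc Us : M.SubFam) (hUc : M.IsSubRep Uc)
    (hle : Uc ≤ Us) (hss : SubquotSemistable θ M Uc Us) :
    SubquotSemistable θ M (orthFam σ M B Us) (orthFam σ M B Uc) := by
  intro Y hY hVY hYW hYne
  set Z := orthFam σ M B Y with hZdef
  have hbiY : orthFam σ M B Z = Y := biorth σ D M B hB Y
  have hUcZ : Uc ≤ Z := by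
    have h1 := orth_antitone σ M B hYW
    rwa [biorth σ D M B hB Uc] at h1
  have hZUs : Z ≤ Us := by
    have h1 := orth_antitone σ M B hVY
    rwa [biorth σ D M B hB Us] at h1
  have hZneUs : Z ≠ Us := by
    intro h
    apply hYne
    rw [← hbiY, h]
  rw [slope_orth_diff σ D M B θ hB hθ Uc Us]
  rw [slope_diff_orth σ D M B θ hB hθ Y Us, ← hZdef]
  rw [neg_le_neg_iff]
  by_cases hZc : Z = Uc
  · have hYeq : Y = orthFam σ M B Uc := by rw [← hbiY, hZc]
    rw [hZc]
  · -- seesaw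
    have hm : 0 < ∑ i, (dimZ Z - dimZ Uc) i := sum_diff_pos M hUcZ hZc
    have hn : 0 < ∑ i, (dimZ Us - dimZ Z) i := sum_diff_pos M hZUs (Ne.symm hZneUs)
    have hsum : dimZ Us - dimZ Uc = (dimZ Z - dimZ Uc) + (dimZ Us - dimZ Z) := by ring
    have h1 := hss Z (orth_isSubRep σ D M B hB Y hY) hUcZ hZUs hZc
    rw [slope_def, slope_def, hsum, map_add] at h1 ⊢
    rw [show ∑ i, ((dimZ Z - dimZ Uc) + (dimZ Us - dimZ Z)) i
        = (∑ i, (dimZ Z - dimZ Uc) i) + (∑ i, (dimZ Us - dimZ Z) i) by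
      rw [← Finset.sum_add_distrib]; rfl] at h1 ⊢
    push_cast at h1 ⊢
    have hmq : (0:ℚ) < ((∑ i, (dimZ Z - dimZ Uc) i : ℤ) : ℚ) := by exact_mod_cast hm
    have hnq : (0:ℚ) < ((∑ i, (dimZ Us - dimZ Z) i : ℤ) : ℚ) := by exact_mod_cast hn
    have := seesaw (p := θ (dimZ Z - dimZ Uc)) (q := θ (dimZ Us - dimZ Z))
      (m := ∑ i, (dimZ Z - dimZ Uc) i) (n := ∑ i, (dimZ Us - dimZ Z) i) hmq hnq (by push_cast; convert h1 using 2 <;> push_cast <;> ring)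
    push_cast at this
    convert this using 2 <;> push_cast <;> ring

end SHN5
namespace SHN6
open QRep Module SHN SHN2 SHN3 SHN4 SHN5

variable {Q : FinQuiver} (σ : QInv Q) (D : Duality Q σ) (M : QRep Q) (B : M.Bilin)
variable (θ : (Q.V → ℤ) →+ ℤ)

lemma subrep_inf {Y Z : M.SubFam} (hY : M.IsSubRep Y) (hZ : M.IsSubRep Z) :
    M.IsSubRep (Y ⊓ Z) := by
  intro a x hx
  exact ⟨hY a x hx.1, hZ a x hx.2⟩

/-- `θ(dim Y) = θ(dim (Y ⊓ Y^⊥))`. -/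
lemma theta_inf_orth (hB : IsSelfDualForm σ D M B) (hθ : SigmaCompatible σ θ)
    (Y : M.SubFam) :
    θ (dimZ (Y ⊓ orthFam σ M B Y)) = θ (dimZ Y) := by
  set W := Y ⊓ orthFam σ M B Y with hW
  set Z := Y ⊔ orthFam σ M B Y with hZ
  have horthZ : orthFam σ M B Z = W := by
    rw [hZ, orth_sup σ D M B hB, biorth σ D M B hB Y, inf_comm]
  have hdim : dimZ Z + dimZ W = dimZ Y + dimZ (orthFam σ M B Y) := by
    funext i
    simp only [Pi.add_apply, dimZ, hW, hZ, Pi.inf_apply, Pi.sup_apply]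
    exact_mod_cast Submodule.finrank_sup_add_finrank_inf_eq (Y i) (orthFam σ M B Y i)
  have hθZ : θ (dimZ Z) = θ (dimZ W) := by
    rw [← horthZ, theta_orth σ D M B θ hB hθ Z]
  have := congrArg θ hdim
  rw [map_add, map_add, hθZ, theta_orth σ D M B θ hB hθ Y] at this
  omega

/-- Last step: semistability of `orth Ur / Ur`, of slope 0. -/
lemma last_semistable (hB : IsSelfDualForm σ D M B) (hθ : SigmaCompatible σ θ)
    (Ur : M.SubFam) (hσq : SigmaSemistableQuot σ θ M B Ur) :
    SubquotSemistable θ M Ur (orthFam σ M B Ur) := by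
  intro Y hY hVY hYW hYne
  -- RHS slope is 0
  have hR : QRep.slope θ (dimZ (orthFam σ M B Ur) - dimZ Ur) = 0 := by
    apply slope_zero_of_theta_zero
    rw [map_sub, theta_orth σ D M B θ hB hθ Ur, sub_self]
  rw [hR]
  set W := Y ⊓ orthFam σ M B Y with hWdef
  have hUrW : Ur ≤ W := by
    refine le_inf hVY ?_
    have h1 := orth_antitone σ M B hYW
    exact le_trans (le_biorth σ D M B hB Ur) h1
  have hWorth : W ≤ orthFam σ M B Ur := le_trans inf_le_left hYW
  have hWiso : IsotropicFam σ M B W := by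
    refine le_trans (inf_le_right : W ≤ orthFam σ M B Y) (orth_antitone σ M B ?_)
    exact inf_le_left
  have hWsub : M.IsSubRep W := subrep_inf M hY (orth_isSubRep σ D M B hB Y hY)
  have hθYW : θ (dimZ Y) = θ (dimZ W) := (theta_inf_orth σ D M B θ hB hθ Y).symm
  have hθWUr : θ (dimZ W) ≤ θ (dimZ Ur) := by
    by_cases hWUr : W = Ur
    · rw [hWUr]
    · have h0 := hσq W hWsub hUrW hWorth hWiso hWUr
      have hpos := sum_diff_pos M hUrW hWUr
      have := theta_le_of_slope_nonpos θ hpos h0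
      rw [map_sub] at this
      omega
  apply slope_nonpos_of_theta_nonpos
  · exact sum_diff_pos M hVY hYne
  · rw [map_sub]
    omega

end SHN6

/-- If `0 = U_0 ⊂ U_1 ⊂ ⋯ ⊂ U_r ⊂ M` is the σ-Harder–Narasimhan
filtration of a self-dual representation `M`, then the extended filtration
`0 = U_0 ⊂ ⋯ ⊂ U_r ⊆ U_r^⊥ ⊂ U_{r-1}^⊥ ⊂ ⋯ ⊂ U_0^⊥ = M` (with the repeated term
deleted when `U_r = U_r^⊥`) is the Harder–Narasimhan filtration of `M` as an ordinary
representation: the orthogonals `U_k^⊥` are subrepresentations, `U_0^⊥ = M`, the chain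
is strictly decreasing, each subquotient `U_{k-1}^⊥/U_k^⊥` is semistable of slope
`-μ(U_k/U_{k-1})`, and `U_r^⊥/U_r` is semistable of slope `0` if it is nonzero. -/
theorem sigmaHN_extends_to_HN (Q : FinQuiver) (σ : QInv Q) (D : Duality Q σ)
    (θ : (Q.V → ℤ) →+ ℤ) (hθ : QRep.SigmaCompatible σ θ)
    (M : QRep Q) (B : M.Bilin) (hB : QRep.IsSelfDualForm σ D M B)
    (r : ℕ) (U : Fin (r+1) → M.SubFam) (hHN : QRep.IsSigmaHN σ θ M B r U) :
    (∀ k, M.IsSubRep (QRep.orthFam σ M B (U k))) ∧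
    (QRep.orthFam σ M B (U 0) = ⊤) ∧
    (∀ k : Fin r, QRep.orthFam σ M B (U k.succ) ≤ QRep.orthFam σ M B (U k.castSucc)) ∧
    (∀ k : Fin r, QRep.orthFam σ M B (U k.succ) ≠ QRep.orthFam σ M B (U k.castSucc)) ∧
    (∀ k : Fin r,
      QRep.SubquotSemistable θ M (QRep.orthFam σ M B (U k.succ))
        (QRep.orthFam σ M B (U k.castSucc)) ∧
      QRep.slope θ (QRep.dimZ (QRep.orthFam σ M B (U k.castSucc))
          - QRep.dimZ (QRep.orthFam σ M B (U k.succ)))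
        = - QRep.stepSlope θ r U k) ∧
    (U (Fin.last r) ≠ QRep.orthFam σ M B (U (Fin.last r)) →
      QRep.SubquotSemistable θ M (U (Fin.last r)) (QRep.orthFam σ M B (U (Fin.last r))) ∧
      QRep.slope θ (QRep.dimZ (QRep.orthFam σ M B (U (Fin.last r)))
          - QRep.dimZ (U (Fin.last r))) = 0) := by
  obtain ⟨hsub, h0, hle, hne, hiso, hss, hdec, hpos, hσq⟩ := hHN
  refine ⟨?_, ?_, ?_, ?_, ?_, ?_⟩
  · exact fun k => SHN3.orth_isSubRep σ D M B hB (U k) (hsub k)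
  · rw [h0]; exact SHN3.orth_bot σ M B
  · exact fun k => SHN3.orth_antitone σ M B (hle k)
  · intro k h
    exact hne k (SHN3.orth_inj σ D M B hB h).symm
  · intro k
    refine ⟨SHN5.middle_semistable σ D M B θ hB hθ (U k.castSucc) (U k.succ)
      (hsub _) (hle k) (hss k), ?_⟩
    rw [SHN5.slope_orth_diff σ D M B θ hB hθ]
    rfl
  · intro _
    refine ⟨SHN6.last_semistable σ D M B θ hB hθ (U (Fin.last r)) hσq, ?_⟩
    apply SHN4.slope_zero_of_theta_zero
    rw [map_sub, SHN4.theta_orth σ D M B θ hB hθ (U (Fin.last r)), sub_self]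
end
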